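/- arXiv:1205.1706 — 4 statements merged into one kernel-verified Lean document; each statement's English description precedes it below -/
import Mathlib

section
/- There is an absolute constant C such that for all integers N ≥ 8, all integers h with 1 ≤ h ≤ N^{1/2}, and all integers x with N < x ≤ 2N, setting M = ⌊(N−h)^{1/3}⌋, one has | Σ_{d₁ < M} (1/d₁) Σ_{d₂ ≤ x/(d₁ M)} 1/d₂ − ( (log M + γ) log x + γ² − (3/2) log² M + γ₁ ) | ≤ C N^{−1/3} log N. -/
open Finset Filter


-- log increment bounds
lemma log_succ_le' {x : ℝ} (hx : 1 ≤ x) : Real.log (x+1) ≤ Real.log x + 1/x := by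
  have hx0 : 0 < x := by linarith
  have h1 : Real.log ((x+1)/x) ≤ (x+1)/x - 1 := Real.log_le_sub_one_of_pos (by positivity)
  rw [Real.log_div (by linarith) hx0.ne'] at h1
  have : (x+1)/x - 1 = 1/x := by field_simp; ring
  linarith [this ▸ h1]

lemma le_log_succ' {x : ℝ} (hx : 1 ≤ x) : Real.log x + 1/(x+1) ≤ Real.log (x+1) := by
  have hx0 : 0 < x := by linarith
  have h1 : Real.log (x/(x+1)) ≤ x/(x+1) - 1 := Real.log_le_sub_one_of_pos (by positivity)
  rw [Real.log_div hx0.ne' (by linarith)] at h1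
  have : x/(x+1) - 1 = -(1/(x+1)) := by field_simp; ring
  linarith [this ▸ h1]

-- harmonic bound
lemma harmonic_est (n : ℕ) (hn : 1 ≤ n) :
    |(∑ i ∈ Icc 1 n, 1/(i:ℝ)) - Real.log n - Real.eulerMascheroniConstant| ≤ 1/n := by
  have hcast : (∑ i ∈ Icc 1 n, 1/(i:ℝ)) = ((harmonic n : ℚ) : ℝ) := by
    rw [harmonic_eq_sum_Icc]; push_cast; simp [one_div]
  have hn0 : (0:ℝ) < n := by exact_mod_cast hn
  have hlow : Real.eulerMascheroniConstant < (harmonic n : ℝ) - Real.log n := by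
    have := Real.eulerMascheroniConstant_lt_eulerMascheroniSeq' n
    rwa [Real.eulerMascheroniSeq', if_neg (by omega)] at this
  have hup : (harmonic n : ℝ) - Real.log (n+1) < Real.eulerMascheroniConstant := by
    exact Real.eulerMascheroniSeq_lt_eulerMascheroniConstant n
  have hls : Real.log ((n:ℝ)+1) ≤ Real.log n + 1/n := log_succ_le' (by exact_mod_cast hn)
  rw [hcast, abs_le]
  constructor <;> nlinarith
lemma mono_le_limit {u : ℕ → ℝ} {l : ℝ} (h : ∀ n, 1 ≤ n → u n ≤ u (n+1))
    (hl : Tendsto u atTop (nhds l)) {m : ℕ} (hm : 1 ≤ m) : u m ≤ l := by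
  apply ge_of_tendsto hl
  filter_upwards [eventually_ge_atTop m] with n hn
  induction n, hn using Nat.le_induction with
  | base => exact le_refl _
  | succ n hn ih => exact ih.trans (h n (hm.trans hn))

lemma anti_ge_limit {u : ℕ → ℝ} {l : ℝ} (h : ∀ n, 1 ≤ n → u (n+1) ≤ u n)
    (hl : Tendsto u atTop (nhds l)) {m : ℕ} (hm : 1 ≤ m) : l ≤ u m := by
  have h2 : -u m ≤ -l := mono_le_limit (u := fun n => -u n) (l := -l)
    (fun n hn => neg_le_neg (h n hn)) hl.neg hm
  linarith

lemma inc_bounds {a b c d : ℝ} (ha : 0 ≤ a) (hab : a ≤ b) (h1 : b - a ≤ c) (h2 : d ≤ b - a)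
    (hc0 : 0 < c) (hd0 : 0 < d) (hcd : c - d = c*d) (hc2d : c ≤ 2*d) :
    2*d - 2*c ≤ (b^2 - a^2)/2 - b*d ∧ (b^2 - a^2)/2 - b*d ≤ a*c - b*d + 2*c - 2*d := by
  constructor
  · nlinarith [mul_nonneg (by linarith : (0:ℝ) ≤ b + a) (by linarith : (0:ℝ) ≤ b - a - d),
      mul_nonneg hd0.le (by linarith : (0:ℝ) ≤ c - (b - a)), mul_pos hd0 hc0]
  · nlinarith [mul_nonneg (by linarith : (0:ℝ) ≤ b + a) (by linarith : (0:ℝ) ≤ c - (b - a)),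
      mul_nonneg hc0.le (by linarith : (0:ℝ) ≤ c - (b - a)), mul_pos hd0 hc0,
      mul_nonneg ha (by linarith : (0:ℝ) ≤ 2*d - c)]

lemma stieltjes_est (γ1 : ℝ)
    (hγ1 : Tendsto (fun m : ℕ => (Real.log m) ^ 2 / 2 - ∑ j ∈ Icc 1 m, Real.log j / j)
      atTop (nhds γ1)) (m : ℕ) (hm : 1 ≤ m) :
    |((Real.log m) ^ 2 / 2 - ∑ j ∈ Icc 1 m, Real.log j / j) - γ1| ≤ (Real.log m + 2)/m := by
  set f : ℕ → ℝ := fun m => (Real.log m) ^ 2 / 2 - ∑ j ∈ Icc 1 m, Real.log j / j with hf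
  have hinc : ∀ n : ℕ, 1 ≤ n → f (n+1) - f n
      = ((Real.log ((n:ℝ)+1))^2 - (Real.log n)^2)/2 - Real.log ((n:ℝ)+1)/((n:ℝ)+1) := by
    intro n hn
    have hs : ∑ j ∈ Icc 1 (n+1), Real.log j / j
        = (∑ j ∈ Icc 1 n, Real.log j / j) + Real.log ((n:ℝ)+1)/((n:ℝ)+1) := by
      rw [Finset.sum_Icc_succ_top (by omega)]
      push_cast; ring
    simp only [hf]
    rw [hs]
    push_cast; ring
  have key : ∀ n : ℕ, 1 ≤ n →
      (2/((n:ℝ)+1) - 2/n ≤ f (n+1) - f n ∧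
       f (n+1) - f n ≤ (Real.log n)/n - Real.log ((n:ℝ)+1)/((n:ℝ)+1) + 2/n - 2/((n:ℝ)+1)) := by
    intro n hn
    have hn0 : (1:ℝ) ≤ (n:ℝ) := by exact_mod_cast hn
    have hnp : (0:ℝ) < n := by linarith
    have ha : 0 ≤ Real.log n := Real.log_nonneg hn0
    have hab : Real.log n ≤ Real.log ((n:ℝ)+1) := Real.log_le_log (by linarith) (by linarith)
    have h1 : Real.log ((n:ℝ)+1) - Real.log n ≤ 1/(n:ℝ) := by
      have := log_succ_le' hn0; linarith
    have h2 : 1/((n:ℝ)+1) ≤ Real.log ((n:ℝ)+1) - Real.log n := by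
      have := le_log_succ' hn0; linarith
    have hcd : 1/(n:ℝ) - 1/((n:ℝ)+1) = (1/(n:ℝ))*(1/((n:ℝ)+1)) := by
      field_simp
      ring
    have hc2d : 1/(n:ℝ) ≤ 2*(1/((n:ℝ)+1)) := by
      rw [mul_one_div, div_le_div_iff₀ hnp (by linarith)]; linarith
    have H := inc_bounds ha hab h1 h2 (by positivity) (by positivity) hcd hc2d
    have hE := hinc n hn
    constructor
    · have := H.1
      rw [hE]
      have e : Real.log ((n:ℝ)+1) * (1/((n:ℝ)+1)) = Real.log ((n:ℝ)+1)/((n:ℝ)+1) := by ring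
      rw [e] at this
      have e2 : 2*(1/((n:ℝ)+1)) = 2/((n:ℝ)+1) := by ring
      have e3 : 2*(1/(n:ℝ)) = 2/(n:ℝ) := by ring
      linarith [this, e2, e3]
    · have := H.2
      rw [hE]
      have e : Real.log ((n:ℝ)+1) * (1/((n:ℝ)+1)) = Real.log ((n:ℝ)+1)/((n:ℝ)+1) := by ring
      have e4 : Real.log n * (1/(n:ℝ)) = Real.log n/(n:ℝ) := by ring
      have e2 : 2*(1/((n:ℝ)+1)) = 2/((n:ℝ)+1) := by ring
      have e3 : 2*(1/(n:ℝ)) = 2/(n:ℝ) := by ring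
      linarith [this, e, e4, e2, e3]
  have h2n : Tendsto (fun n : ℕ => (2:ℝ)/n) atTop (nhds 0) :=
    tendsto_const_div_atTop_nhds_zero_nat 2
  have hAlim : Tendsto (fun n : ℕ => f n - 2/n) atTop (nhds γ1) := by
    simpa using hγ1.sub h2n
  have hloglim : Tendsto (fun n : ℕ => Real.log n / n) atTop (nhds 0) := by
    have := Real.isLittleO_log_id_atTop.tendsto_div_nhds_zero
    exact this.comp tendsto_natCast_atTop_atTop
  have hBlim : Tendsto (fun n : ℕ => f n + (Real.log n + 2)/n) atTop (nhds γ1) := by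
    have h3 : Tendsto (fun n : ℕ => f n + (Real.log n / n + 2/n)) atTop (nhds (γ1 + (0+0))) :=
      hγ1.add (hloglim.add h2n)
    simpa [add_div] using h3
  have hup : f m - 2/m ≤ γ1 := by
    apply mono_le_limit (u := fun n : ℕ => f n - 2/n) _ hAlim hm
    intro n hn
    have := (key n hn).1
    push_cast
    linarith
  have hlow : γ1 ≤ f m + (Real.log m + 2)/m := by
    apply anti_ge_limit (u := fun n : ℕ => f n + (Real.log n + 2)/n) _ hBlim hm
    intro n hn
    have h4 := (key n hn).2
    have hn0 : (1:ℝ) ≤ (n:ℝ) := by exact_mod_cast hn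
    push_cast
    rw [add_div, add_div]
    linarith
  have hm0 : (0:ℝ) < m := by exact_mod_cast hm
  have hlm : 0 ≤ Real.log m := Real.log_nonneg (by exact_mod_cast hm)
  have h2m : 2/(m:ℝ) ≤ (Real.log m + 2)/m := by gcongr; linarith
  rw [abs_le]
  refine ⟨by simp only [hf] at hlow ⊢; linarith, by simp only [hf] at hup ⊢; linarith⟩
lemma cube_rpow_third {t : ℝ} (ht : 0 ≤ t) : (t ^ ((1:ℝ)/3)) ^ (3:ℕ) = t := by
  rw [← Real.rpow_natCast (t ^ ((1:ℝ)/3)) 3, ← Real.rpow_mul ht]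
  norm_num

lemma cube_of_le_third {t y : ℝ} (ht : 0 ≤ t) (hy : 0 ≤ y) (hle : y ≤ t ^ ((1:ℝ)/3)) :
    y ^ (3:ℕ) ≤ t := by
  calc y ^ (3:ℕ) ≤ (t ^ ((1:ℝ)/3)) ^ (3:ℕ) := pow_le_pow_left₀ hy hle 3
  _ = t := cube_rpow_third ht

lemma le_cube_of_third_le {t y : ℝ} (ht : 0 ≤ t) (h : t ^ ((1:ℝ)/3) ≤ y) : t ≤ y ^ (3:ℕ) := by
  calc t = (t ^ ((1:ℝ)/3)) ^ (3:ℕ) := (cube_rpow_third ht).symm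
  _ ≤ y ^ (3:ℕ) := pow_le_pow_left₀ (Real.rpow_nonneg ht _) h 3

lemma third_le_of_cube {t y : ℝ} (ht : 0 ≤ t) (hy : 0 ≤ y) (h : t ≤ y ^ (3:ℕ)) :
    t ^ ((1:ℝ)/3) ≤ y := by
  have h1 : t ^ ((1:ℝ)/3) ≤ (y ^ (3:ℕ) : ℝ) ^ ((1:ℝ)/3) :=
    Real.rpow_le_rpow ht h (by norm_num)
  have h2 : (y ^ (3:ℕ) : ℝ) ^ ((1:ℝ)/3) = y := by
    rw [← Real.rpow_natCast y 3, ← Real.rpow_mul hy]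
    norm_num
  rwa [h2] at h1

lemma log_ge_one {x : ℝ} (hx : 8 ≤ x) : 1 ≤ Real.log x := by
  rw [Real.le_log_iff_exp_le (by linarith)]
  have := Real.exp_one_lt_d9
  linarith
lemma per_term_est (x d M : ℕ) (hd1 : 1 ≤ d) (hdM : (d:ℝ) ≤ (M:ℝ) - 1) (hM2 : 2 ≤ M)
    (hMx : ((M:ℝ)) ^ (3:ℕ) ≤ x) :
    |(∑ i ∈ Icc 1 (x/(d*M)), 1/(i:ℝ))
      - (Real.log x - Real.log d - Real.log M + Real.eulerMascheroniConstant)|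
      ≤ 4*((d:ℝ)*M)/x := by
  have hM2R : (2:ℝ) ≤ M := by exact_mod_cast hM2
  have hdR : (1:ℝ) ≤ d := by exact_mod_cast hd1
  have hDr : (0:ℝ) < (d:ℝ)*M := by nlinarith
  have h2D : 2*((d:ℝ)*M) ≤ x := by
    nlinarith [hMx, mul_le_mul_of_nonneg_right hdM (by linarith : (0:ℝ) ≤ (M:ℝ)),
      mul_nonneg (by linarith : (0:ℝ) ≤ (M:ℝ)) (sq_nonneg ((M:ℝ)-1))]
  have hxpos : (0:ℝ) < x := by nlinarith
  have hDn1 : 0 < d*M := by positivity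
  have hDlex : d*M ≤ x := by
    have : ((d*M : ℕ):ℝ) ≤ (x:ℝ) := by push_cast; nlinarith
    exact_mod_cast this
  set q := x/(d*M) with hq
  have hq1 : 1 ≤ q := (Nat.one_le_div_iff hDn1).mpr hDlex
  have hqD_le : q*(d*M) ≤ x := Nat.div_mul_le_self x (d*M)
  have hx_lt : x < (q+1)*(d*M) := by
    rw [hq]
    exact (Nat.div_lt_iff_lt_mul hDn1).mp (Nat.lt_succ_self _)
  have hq_le_r : (q:ℝ) ≤ (x:ℝ)/((d:ℝ)*M) := by
    rw [le_div_iff₀ hDr]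
    exact_mod_cast hqD_le
  have hr_lt : (x:ℝ)/((d:ℝ)*M) < q + 1 := by
    rw [div_lt_iff₀ hDr]
    exact_mod_cast hx_lt
  have hr2 : (2:ℝ) ≤ (x:ℝ)/((d:ℝ)*M) := by rw [le_div_iff₀ hDr]; linarith
  have hqhalf : (x:ℝ)/((d:ℝ)*M)/2 ≤ q := by linarith
  have hqR1 : (1:ℝ) ≤ q := by exact_mod_cast hq1
  have hqpos : (0:ℝ) < q := by linarith
  have hH := harmonic_est q hq1
  have hlogq_le : Real.log q ≤ Real.log ((x:ℝ)/((d:ℝ)*M)) :=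
    Real.log_le_log hqpos hq_le_r
  have hlogr_le : Real.log ((x:ℝ)/((d:ℝ)*M)) ≤ Real.log q + 1/q := by
    have h1 : Real.log ((x:ℝ)/((d:ℝ)*M)) ≤ Real.log ((q:ℝ)+1) :=
      Real.log_le_log (by linarith) hr_lt.le
    have h2 := log_succ_le' hqR1
    linarith
  have hinvq : 1/(q:ℝ) ≤ 2*((d:ℝ)*M)/x := by
    have h1 : 1/(q:ℝ) ≤ 1/((x:ℝ)/((d:ℝ)*M)/2) :=
      one_div_le_one_div_of_le (by linarith) hqhalf
    have h2 : 1/((x:ℝ)/((d:ℝ)*M)/2) = 2*((d:ℝ)*M)/x := by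
      rw [div_div, one_div_div]; ring
    linarith [h2 ▸ h1]
  have hlogr : Real.log ((x:ℝ)/((d:ℝ)*M)) = Real.log x - Real.log d - Real.log M := by
    rw [Real.log_div (by positivity) (by positivity), Real.log_mul (by positivity) (by positivity)]
    ring
  have e : (∑ i ∈ Icc 1 q, 1/(i:ℝ))
      - (Real.log x - Real.log d - Real.log M + Real.eulerMascheroniConstant)
      = ((∑ i ∈ Icc 1 q, 1/(i:ℝ)) - Real.log q - Real.eulerMascheroniConstant)
        + (Real.log q - Real.log ((x:ℝ)/((d:ℝ)*M))) := by
    rw [hlogr]; ring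
  rw [e]
  calc |((∑ i ∈ Icc 1 q, 1/(i:ℝ)) - Real.log q - Real.eulerMascheroniConstant)
        + (Real.log q - Real.log ((x:ℝ)/((d:ℝ)*M)))|
      ≤ |(∑ i ∈ Icc 1 q, 1/(i:ℝ)) - Real.log q - Real.eulerMascheroniConstant|
        + |Real.log q - Real.log ((x:ℝ)/((d:ℝ)*M))| := abs_add_le _ _
    _ ≤ 1/q + 1/q :=
        add_le_add hH (by rw [abs_le]; constructor <;> linarith)
    _ ≤ 2*((d:ℝ)*M)/x + 2*((d:ℝ)*M)/x := by linarith
    _ = 4*((d:ℝ)*M)/x := by ring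
lemma sq_half_diff_le {a b c : ℝ} (ha : 0 ≤ a) (hab : a ≤ b) (hbac : b - a ≤ c) (hc : 0 ≤ c) :
    b^2/2 - a^2/2 ≤ b*c := by
  nlinarith [mul_nonneg (by linarith : (0:ℝ) ≤ b + a) (by linarith : (0:ℝ) ≤ c - (b - a)),
    mul_nonneg (by linarith : (0:ℝ) ≤ b - a) hc]

lemma cube_helper {m t n : ℝ} (hm : 2 ≤ m) (h1 : n/2 ≤ t) (h2 : t ≤ (m+1)^(3:ℕ)) :
    n ≤ (2*m)^(3:ℕ) := by
  have hMp1 : m+1 ≤ (3/2)*m := by linarith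
  have hp := pow_le_pow_left₀ (by linarith : (0:ℝ) ≤ m+1) hMp1 3
  nlinarith [hp]

lemma sqrt_le_half {n : ℝ} (hn : 8 ≤ n) : n ^ ((1:ℝ)/2) ≤ n/2 := by
  have hnpos : (0:ℝ) < n := by linarith
  have key : (n ^ ((1:ℝ)/2)) ^ (2:ℕ) = n := by
    rw [← Real.rpow_natCast (n ^ ((1:ℝ)/2)) 2, ← Real.rpow_mul hnpos.le]
    norm_num
  nlinarith [Real.rpow_nonneg hnpos.le ((1:ℝ)/2), key, sq_nonneg (n ^ ((1:ℝ)/2) - 2)]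
set_option maxHeartbeats 2000000 in
theorem double_harmonic_sum_asymptotic
    (γ1 : ℝ)
    (hγ1 : Tendsto
      (fun m : ℕ => (Real.log m) ^ 2 / 2 - ∑ j ∈ Icc 1 m, Real.log j / j)
      atTop (nhds γ1)) :
    ∃ C : ℝ, ∀ N h x : ℕ, 8 ≤ N → 1 ≤ h →
      (h : ℝ) ≤ (N : ℝ) ^ ((1 : ℝ) / 2) → N < x → x ≤ 2 * N →
      |(∑ d₁ ∈ Ico 1 ⌊((N - h : ℕ) : ℝ) ^ ((1 : ℝ) / 3)⌋₊, (1 / (d₁ : ℝ)) *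
          ∑ d₂ ∈ Icc 1 (x / (d₁ * ⌊((N - h : ℕ) : ℝ) ^ ((1 : ℝ) / 3)⌋₊)), (1 / (d₂ : ℝ)))
        - ((Real.log ⌊((N - h : ℕ) : ℝ) ^ ((1 : ℝ) / 3)⌋₊ + Real.eulerMascheroniConstant)
              * Real.log x
            + Real.eulerMascheroniConstant ^ 2
            - (3 / 2) * (Real.log ⌊((N - h : ℕ) : ℝ) ^ ((1 : ℝ) / 3)⌋₊) ^ 2 + γ1)|
        ≤ C * (N : ℝ) ^ (-(1 : ℝ) / 3) * Real.log N := by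
  refine ⟨300 + 3*|γ1|, fun N h x hN hh hhx hNx hx2N => ?_⟩
  set M := ⌊((N - h : ℕ) : ℝ) ^ ((1 : ℝ) / 3)⌋₊ with hMdef
  have hN8 : (8:ℝ) ≤ N := by exact_mod_cast hN
  have hNpos : (0:ℝ) < N := by linarith
  have hsqle : (N:ℝ) ^ ((1:ℝ)/2) ≤ (N:ℝ)/2 := sqrt_le_half hN8
  have hhR : (h:ℝ) ≤ (N:ℝ)/2 := hhx.trans hsqle
  have hhN : h ≤ N := by
    have : (h:ℝ) ≤ (N:ℝ) := by linarith
    exact_mod_cast this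
  have htR : ((N - h : ℕ) : ℝ) = (N:ℝ) - h := by
    rw [Nat.cast_sub hhN]
  have ht2 : (N:ℝ)/2 ≤ ((N - h : ℕ) : ℝ) := by rw [htR]; linarith
  have htN : ((N - h : ℕ) : ℝ) ≤ N := by
    rw [htR]
    have : (0:ℝ) ≤ h := Nat.cast_nonneg _
    linarith
  have ht0 : (0:ℝ) ≤ ((N - h : ℕ) : ℝ) := Nat.cast_nonneg _
  have hMle : (M:ℝ) ≤ ((N - h : ℕ) : ℝ) ^ ((1:ℝ)/3) := Nat.floor_le (Real.rpow_nonneg ht0 _)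
  have hMlt : ((N - h : ℕ) : ℝ) ^ ((1:ℝ)/3) < (M:ℝ) + 1 := Nat.lt_floor_add_one _
  have hM3 : (M:ℝ) ^ (3:ℕ) ≤ ((N - h : ℕ) : ℝ) := cube_of_le_third ht0 (Nat.cast_nonneg _) hMle
  have hM3N : (M:ℝ) ^ (3:ℕ) ≤ N := hM3.trans htN
  have hNM13 : ((N - h : ℕ) : ℝ) ≤ ((M:ℝ)+1) ^ (3:ℕ) := le_cube_of_third_le ht0 hMlt.le
  have hxN : (N:ℝ) < x := by exact_mod_cast hNx
  have hx2 : (x:ℝ) ≤ 2*N := by exact_mod_cast hx2N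
  have hxpos : (0:ℝ) < x := by linarith
  have hlogN : 1 ≤ Real.log N := log_ge_one hN8
  have hlogx1 : 1 ≤ Real.log x := log_ge_one (by linarith)
  have hlog2 : Real.log 2 ≤ 1 := by
    rw [Real.log_le_iff_le_exp (by norm_num)]
    linarith [Real.exp_one_gt_d9]
  have hlogx2N : Real.log x ≤ 2 * Real.log N := by
    have h2 : Real.log x ≤ Real.log (2*N) := Real.log_le_log hxpos (by linarith)
    rw [Real.log_mul two_ne_zero (ne_of_gt hNpos)] at h2
    linarith
  have hγpos : (0:ℝ) < Real.eulerMascheroniConstant := by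
    linarith [Real.one_half_lt_eulerMascheroniConstant]
  have hγlt1 : Real.eulerMascheroniConstant < 1 := by
    linarith [Real.eulerMascheroniConstant_lt_two_thirds]
  have hN13pos : (0:ℝ) < (N:ℝ) ^ ((1:ℝ)/3) := Real.rpow_pos_of_pos hNpos _
  have hninv_eq : (N:ℝ) ^ (-(1:ℝ)/3) = ((N:ℝ) ^ ((1:ℝ)/3))⁻¹ := by
    rw [neg_div, Real.rpow_neg hNpos.le]
  have hninv_pos : (0:ℝ) < (N:ℝ) ^ (-(1:ℝ)/3) := by rw [hninv_eq]; positivity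
  set ninv := (N:ℝ) ^ (-(1:ℝ)/3) with hninvdef
  have hγ1abs : (0:ℝ) ≤ |γ1| := abs_nonneg _
  by_cases hM2 : 2 ≤ M
  · -- main case
    have hM2R : (2:ℝ) ≤ M := by exact_mod_cast hM2
    have hMpos : (0:ℝ) < M := by linarith
    -- N ≤ (2M)^3
    have hcube : (N:ℝ) ≤ (2*(M:ℝ)) ^ (3:ℕ) := cube_helper hM2R ht2 hNM13
    have hN13 : (N:ℝ) ^ ((1:ℝ)/3) ≤ 2*M := third_le_of_cube hNpos.le (by linarith) hcube
    have hMinv : 1/(M:ℝ) ≤ 2*ninv := by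
      have e2 : 2*((N:ℝ)^((1:ℝ)/3))⁻¹ = 2/((N:ℝ)^((1:ℝ)/3)) := by ring
      rw [hninv_eq, e2, div_le_div_iff₀ hMpos hN13pos, one_mul]
      exact hN13
    -- abbreviations
    set A := Real.log x - Real.log M + Real.eulerMascheroniConstant with hAdef
    set P := M - 1 with hPdef
    have hMP : M = P + 1 := by omega
    have hP1 : 1 ≤ P := by omega
    have hPR : (1:ℝ) ≤ P := by exact_mod_cast hP1
    have hPpos : (0:ℝ) < P := by linarith
    have hMPR : (M:ℝ) = (P:ℝ) + 1 := by rw [hMP]; push_cast; ring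
    have hIco : Ico 1 M = Icc 1 P := by rw [hMP, Finset.Ico_add_one_right_eq_Icc]
    set HP := ∑ d ∈ Icc 1 P, 1/(d:ℝ) with hHPdef
    set LP := ∑ d ∈ Icc 1 P, Real.log d/(d:ℝ) with hLPdef
    set S := ∑ d₁ ∈ Ico 1 M, (1 / (d₁ : ℝ)) *
          ∑ d₂ ∈ Icc 1 (x / (d₁ * M)), (1 / (d₂ : ℝ)) with hSdef
    set T := ∑ d ∈ Ico 1 M, (1/(d:ℝ))*(A - Real.log d) with hTdef
    have hterm : ∀ d ∈ Ico 1 M,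
        |(1 / (d : ℝ)) * (∑ d₂ ∈ Icc 1 (x / (d * M)), (1 / (d₂ : ℝ)))
            - (1/(d:ℝ))*(A - Real.log d)| ≤ 4*(M:ℝ)/x := by
      intro d hd
      rw [Finset.mem_Ico] at hd
      have hd1R : (1:ℝ) ≤ d := by exact_mod_cast hd.1
      have hdpos : (0:ℝ) < d := by linarith
      have hdM : (d:ℝ) ≤ (M:ℝ) - 1 := by
        have h5 : d + 1 ≤ M := hd.2
        have h6 : ((d:ℝ)+1) ≤ (M:ℝ) := by exact_mod_cast h5
        linarith
      have hMx3 : (M:ℝ) ^ (3:ℕ) ≤ x := by linarith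
      have hpe := per_term_est x d M hd.1 hdM hM2 hMx3
      have e1 : (1 / (d : ℝ)) * (∑ d₂ ∈ Icc 1 (x / (d * M)), (1 / (d₂ : ℝ)))
            - (1/(d:ℝ))*(A - Real.log d)
          = (1/(d:ℝ)) * ((∑ d₂ ∈ Icc 1 (x / (d * M)), (1 / (d₂ : ℝ)))
              - (Real.log x - Real.log d - Real.log M + Real.eulerMascheroniConstant)) := by
        rw [hAdef]; ring
      rw [e1, abs_mul, abs_of_nonneg (by positivity : (0:ℝ) ≤ 1/(d:ℝ))]
      have h7 := mul_le_mul_of_nonneg_left hpe (by positivity : (0:ℝ) ≤ 1/(d:ℝ))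
      have e3 : (1/(d:ℝ)) * (4*((d:ℝ)*M)/x) = 4*(M:ℝ)/x := by
        field_simp
      exact le_trans h7 (le_of_eq e3)
    have hST : |S - T| ≤ 4*(M:ℝ)^2/x := by
      rw [hSdef, hTdef, ← Finset.sum_sub_distrib]
      refine le_trans (Finset.abs_sum_le_sum_abs _ _) ?_
      refine le_trans (Finset.sum_le_sum hterm) ?_
      rw [Finset.sum_const, nsmul_eq_mul, Nat.card_Ico]
      have h8 : ((M - 1 : ℕ):ℝ) ≤ (M:ℝ) := Nat.cast_le.mpr (Nat.sub_le M 1)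
      calc ((M - 1 : ℕ):ℝ) * (4*(M:ℝ)/x) ≤ (M:ℝ) * (4*(M:ℝ)/x) :=
            mul_le_mul_of_nonneg_right h8 (by positivity)
        _ = 4*(M:ℝ)^2/x := by ring
    have hST2 : |S - T| ≤ 8*ninv := by
      have h9 : 4*(M:ℝ)^2/x ≤ 4*(M:ℝ)^2/(M:ℝ)^(3:ℕ) :=
        div_le_div_of_nonneg_left (by positivity) (by positivity) (by linarith)
      have h10 : 4*(M:ℝ)^2/(M:ℝ)^(3:ℕ) = 4*(1/(M:ℝ)) := by
        field_simp
      have h11 : 4*(1/(M:ℝ)) ≤ 8*ninv := by linarith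
      linarith
    have hT : T = A * HP - LP := by
      rw [hTdef, hIco, hHPdef, hLPdef]
      rw [Finset.mul_sum, ← Finset.sum_sub_distrib]
      exact Finset.sum_congr rfl (fun d _ => by ring)
    have hHPb := harmonic_est P hP1
    rw [← hHPdef] at hHPb
    have hlogsucc : Real.log ((P:ℝ)+1) ≤ Real.log P + 1/P := log_succ_le' hPR
    have hlogM_eq : Real.log (M:ℝ) = Real.log ((P:ℝ)+1) := by rw [hMPR]
    have hlogPM1 : Real.log M ≤ Real.log P + 1/P := by rw [hlogM_eq]; exact hlogsucc
    have hlogP0 : 0 ≤ Real.log P := Real.log_nonneg hPR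
    have hlogPM0 : Real.log P ≤ Real.log M := by
      rw [hlogM_eq]; exact Real.log_le_log hPpos (by linarith)
    have hlogM0 : 0 ≤ Real.log M := le_trans hlogP0 hlogPM0
    have e2P : 2/(P:ℝ) = 1/P + 1/P := by ring
    have hE1 : |HP - (Real.log M + Real.eulerMascheroniConstant)| ≤ 2/P := by
      rw [abs_le] at hHPb ⊢
      constructor
      · linarith [hHPb.1]
      · linarith [hHPb.2]
    have hE2' := stieltjes_est γ1 hγ1 P hP1
    rw [← hLPdef] at hE2'
    have hsq1 : 0 ≤ (Real.log M)^2/2 - (Real.log P)^2/2 := by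
      have := pow_le_pow_left₀ hlogP0 hlogPM0 2
      linarith
    have hsq2 : (Real.log M)^2/2 - (Real.log P)^2/2 ≤ Real.log M * (1/P) :=
      sq_half_diff_le hlogP0 hlogPM0 (by linarith) (by positivity)
    have hE2 : |LP - ((Real.log M)^2/2 - γ1)| ≤ (Real.log P + 2)/P + Real.log M*(1/P) := by
      rw [abs_le] at hE2' ⊢
      have hmn : 0 ≤ Real.log M * (1/(P:ℝ)) := by positivity
      constructor
      · linarith [hE2'.2]
      · linarith [hE2'.1]
    have hAabs : |A| ≤ Real.log x + Real.log M + 1 := by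
      rw [hAdef, abs_le]
      constructor <;> linarith
    have hδ2 : T - ((Real.log M + Real.eulerMascheroniConstant)*Real.log x
          + Real.eulerMascheroniConstant^2 - 3/2*(Real.log M)^2 + γ1)
        = A*(HP - (Real.log M + Real.eulerMascheroniConstant))
          - (LP - ((Real.log M)^2/2 - γ1)) := by
      rw [hT, hAdef]; ring
    have h1P : 1/(P:ℝ) ≤ 4*ninv := by
      have hPM2 : (M:ℝ) ≤ 2*P := by rw [hMPR]; linarith
      have h12 : 1/(P:ℝ) ≤ 2/(M:ℝ) := by
        rw [div_le_div_iff₀ hPpos hMpos]; linarith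
      have e4 : 2/(M:ℝ) = 2*(1/(M:ℝ)) := by ring
      linarith
    have hMlex : (M:ℝ) ≤ x := by
      have : (M:ℝ) ≤ (M:ℝ) ^ (3:ℕ) := le_self_pow₀ (by linarith) (by norm_num)
      linarith
    have hlogM_x : Real.log M ≤ Real.log x := Real.log_le_log hMpos hMlex
    have hlogM2N : Real.log M ≤ 2*Real.log N := le_trans hlogM_x hlogx2N
    have hlogP2N : Real.log P ≤ 2*Real.log N := le_trans hlogPM0 hlogM2N
    have hb1 : |A| ≤ 5*Real.log N := by linarith
    have hb2 : |HP - (Real.log M + Real.eulerMascheroniConstant)| ≤ 8*ninv := by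
      linarith
    have hprod : |A| * |HP - (Real.log M + Real.eulerMascheroniConstant)|
        ≤ (5*Real.log N)*(8*ninv) :=
      mul_le_mul hb1 hb2 (abs_nonneg _) (by linarith)
    have hb3 : |LP - ((Real.log M)^2/2 - γ1)| ≤ 24*(ninv*Real.log N) := by
      have e5 : (Real.log P + 2)/(P:ℝ) + Real.log M*(1/P)
          = (Real.log P + 2 + Real.log M)*(1/P) := by ring
      have h6b : Real.log P + 2 + Real.log M ≤ 6*Real.log N := by linarith
      have h7b : (Real.log P + 2 + Real.log M)*(1/(P:ℝ)) ≤ (6*Real.log N)*(4*ninv) :=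
        mul_le_mul h6b h1P (by positivity) (by linarith)
      have : (6*Real.log N)*(4*ninv) = 24*(ninv*Real.log N) := by ring
      linarith
    have habs2 : |T - ((Real.log M + Real.eulerMascheroniConstant)*Real.log x
          + Real.eulerMascheroniConstant^2 - 3/2*(Real.log M)^2 + γ1)|
        ≤ |A| * |HP - (Real.log M + Real.eulerMascheroniConstant)|
          + |LP - ((Real.log M)^2/2 - γ1)| := by
      rw [hδ2, sub_eq_add_neg]
      refine le_trans (abs_add_le _ _) ?_
      rw [abs_neg, abs_mul]
    have hsplit : S - ((Real.log M + Real.eulerMascheroniConstant)*Real.log x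
          + Real.eulerMascheroniConstant^2 - 3/2*(Real.log M)^2 + γ1)
        = (S - T) + (T - ((Real.log M + Real.eulerMascheroniConstant)*Real.log x
          + Real.eulerMascheroniConstant^2 - 3/2*(Real.log M)^2 + γ1)) := by ring
    calc |S - ((Real.log M + Real.eulerMascheroniConstant)*Real.log x
          + Real.eulerMascheroniConstant^2 - 3/2*(Real.log M)^2 + γ1)|
        ≤ |S - T| + |T - ((Real.log M + Real.eulerMascheroniConstant)*Real.log x
          + Real.eulerMascheroniConstant^2 - 3/2*(Real.log M)^2 + γ1)| := by
          rw [hsplit]; exact abs_add_le _ _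
      _ ≤ 8*ninv + ((5*Real.log N)*(8*ninv) + 24*(ninv*Real.log N)) := by linarith
      _ ≤ (300 + 3*|γ1|)*ninv*Real.log N := by
          have c1 : ninv ≤ ninv*Real.log N := le_mul_of_one_le_right hninv_pos.le hlogN
          have c2 : 0 ≤ |γ1| * (ninv*Real.log N) := by positivity
          have c3 : 0 ≤ ninv*Real.log N := by positivity
          linarith [c1, c2, c3]
  · -- M = 1 case
    have hM1lb : 1 ≤ M := by
      have h1t : (1:ℝ) ≤ ((N - h:ℕ):ℝ) := by linarith
      have h2t := Real.rpow_le_rpow (by norm_num : (0:ℝ) ≤ 1) h1t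
        (by norm_num : (0:ℝ) ≤ 1/3)
      rw [Real.one_rpow] at h2t
      rw [hMdef]
      exact Nat.le_floor (by exact_mod_cast h2t)
    have hMeq : M = 1 := by omega
    have hflt : ((N - h:ℕ):ℝ) ^ ((1:ℝ)/3) < 2 := by
      have hlt : ⌊((N - h:ℕ):ℝ) ^ ((1:ℝ)/3)⌋₊ < 2 := by rw [← hMdef]; omega
      have h2 := (Nat.floor_lt (Real.rpow_nonneg ht0 _)).mp hlt
      exact_mod_cast h2
    have hNh8 : ((N - h:ℕ):ℝ) ≤ 8 := by
      have h8 := le_cube_of_third_le ht0 hflt.le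
      have e8 : ((2:ℝ))^(3:ℕ) = 8 := by norm_num
      linarith
    have hN16 : (N:ℝ) ≤ 16 := by linarith
    have hx32 : (x:ℝ) ≤ 32 := by linarith
    have hlogx31 : Real.log x ≤ 31 := by linarith [Real.log_le_sub_one_of_pos hxpos]
    have hN27 : (N:ℝ) ≤ (3:ℝ)^(3:ℕ) := by
      have e27 : ((3:ℝ))^(3:ℕ) = 27 := by norm_num
      linarith
    have hN13le3 : (N:ℝ)^((1:ℝ)/3) ≤ 3 := third_le_of_cube hNpos.le (by norm_num) hN27
    have hninv13 : (1:ℝ)/3 ≤ ninv := by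
      rw [hninv_eq, ← one_div]
      exact one_div_le_one_div_of_le hN13pos hN13le3
    rw [hMeq]
    simp only [Finset.Ico_self, Finset.sum_empty, Nat.cast_one, Real.log_one, zero_sub,
      abs_neg, zero_add]
    have hb : |Real.eulerMascheroniConstant*Real.log x + Real.eulerMascheroniConstant^2
        - 3/2*(0:ℝ)^2 + γ1| ≤ 33 + |γ1| := by
      have he : Real.eulerMascheroniConstant*Real.log x + Real.eulerMascheroniConstant^2
          - 3/2*(0:ℝ)^2 + γ1
          = (Real.eulerMascheroniConstant*Real.log x + Real.eulerMascheroniConstant^2) + γ1 := by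
        ring
      rw [he]
      refine le_trans (abs_add_le _ _) ?_
      have h0 : 0 ≤ Real.eulerMascheroniConstant*Real.log x :=
        mul_nonneg hγpos.le (by linarith)
      have h1 : Real.eulerMascheroniConstant*Real.log x ≤ 1*31 :=
        mul_le_mul hγlt1.le hlogx31 (by linarith) (by norm_num)
      have h2 : Real.eulerMascheroniConstant^2 ≤ 1 := by nlinarith [hγpos, hγlt1]
      have h3 : |Real.eulerMascheroniConstant*Real.log x + Real.eulerMascheroniConstant^2|
          = Real.eulerMascheroniConstant*Real.log x + Real.eulerMascheroniConstant^2 :=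
        abs_of_nonneg (by positivity)
      rw [h3]
      linarith
    have hRHS : 33 + |γ1| ≤ (300 + 3*|γ1|)*ninv*Real.log N := by
      have h2 : (1:ℝ)/3 ≤ ninv*Real.log N := by
        calc (1:ℝ)/3 ≤ ninv := hninv13
          _ = ninv*1 := by ring
          _ ≤ ninv*Real.log N := mul_le_mul_of_nonneg_left hlogN hninv_pos.le
      calc 33 + |γ1| ≤ 100 + |γ1| := by linarith
        _ = (300 + 3*|γ1|)*(1/3) := by ring
        _ ≤ (300 + 3*|γ1|)*(ninv*Real.log N) := by
            refine mul_le_mul_of_nonneg_left h2 ?_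
            positivity
        _ = (300 + 3*|γ1|)*ninv*Real.log N := by ring
    linarith [hb, hRHS]
end

section
/- There is an absolute constant K such that for all positive integers N, H with 2H ≤ N and every f: ℕ→ℝ, one has Σ_{N<x≤2N} ( Σ_{x<n≤x+H} f(n) )² ≤ K ( ‖f‖∞ · ( N H² · Σ_{N<x≤2N} ( Σ_{n: |n−x|≤H} (1 − |n−x|/H) f(n) )² )^{1/2} + ‖f‖∞² ( N^{1/2} H^{5/2} + H³ ) ), where ‖f‖∞ = max_{N−2H<n≤2N+2H} |f(n)|. In particular, a bound J̃_f(N,H) ≪ N H²/G for the modified Selberg integral of a balanced f implies the halved-gain bound J_f(N,H) ≪ ‖f‖∞ N H² G^{−1/2} + ‖f‖∞² N^{1/2} H^{5/2} for the Selberg integral. -/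
open Finset

lemma swapA (N H : ℕ) (f g : ℕ → ℝ) :
    ∑ x ∈ Ioc N (2*N), (∑ n ∈ Ioc x (x+H), f n) * g x
      = ∑ n ∈ Ioc N (2*N+H), f n *
          ∑ x ∈ (Ioc N (2*N)).filter (fun x => x < n ∧ n ≤ x + H), g x := by
  have h1 : ∀ x ∈ Ioc N (2*N), (∑ n ∈ Ioc x (x+H), f n) * g x
      = ∑ n ∈ Ioc N (2*N+H), if x < n ∧ n ≤ x + H then f n * g x else 0 := by
    intro x hx
    simp only [mem_Ioc] at hx
    rw [sum_mul, ← sum_filter]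
    congr 1
    ext n
    simp only [mem_Ioc, mem_filter]
    omega
  rw [sum_congr rfl h1, Finset.sum_comm]
  refine sum_congr rfl fun n _ => ?_
  rw [← sum_filter, mul_sum]

lemma countB (n H m : ℕ) (hH : 0 < H) (hn : H ≤ n) (hm : m ∈ Icc (n-H) (n+H)) :
    ((((Ico (n-H) n).filter (fun x => x < m ∧ m ≤ x + H)).card : ℝ))
      = (H : ℝ) - |(m : ℝ) - (n : ℝ)| := by
  have hset : (Ico (n-H) n).filter (fun x => x < m ∧ m ≤ x + H)
      = Ico (max (n-H) (m-H)) (min n m) := by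
    ext x
    simp only [mem_Ico, mem_filter, lt_min_iff, max_le_iff]
    omega
  simp only [mem_Icc] at hm
  rw [hset, Nat.card_Ico]
  rcases le_total m n with h | h
  · have h1 : min n m = m := by omega
    have h2 : max (n-H) (m-H) = n - H := by omega
    have h3 : |(m:ℝ) - n| = ((n - m : ℕ) : ℝ) := by
      rw [abs_sub_comm, abs_of_nonneg]
      · push_cast [Nat.cast_sub h]; ring
      · have := Nat.cast_le (α := ℝ).2 h; linarith
    rw [h1, h2, h3]
    have h4 : m - (n - H) = H - (n - m) := by omega
    rw [h4, Nat.cast_sub (by omega), Nat.cast_sub h]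
  · have h1 : min n m = n := by omega
    have h2 : max (n-H) (m-H) = m - H := by omega
    have h3 : |(m:ℝ) - n| = ((m - n : ℕ) : ℝ) := by
      rw [abs_of_nonneg]
      · push_cast [Nat.cast_sub h]; ring
      · have := Nat.cast_le (α := ℝ).2 h; linarith
    rw [h1, h2, h3]
    have h4 : n - (m - H) = H - (m - n) := by omega
    rw [h4, Nat.cast_sub (by omega), Nat.cast_sub h]

lemma keyC (n H : ℕ) (hH : 0 < H) (hn : H ≤ n) (f : ℕ → ℝ) :
    ∑ x ∈ Ico (n-H) n, (∑ m ∈ Ioc x (x+H), f m)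
      = (H:ℝ) * ∑ m ∈ Icc (n-H) (n+H), (1 - |(m:ℝ)-(n:ℝ)|/H) * f m := by
  have h1 : ∀ x ∈ Ico (n-H) n, (∑ m ∈ Ioc x (x+H), f m)
      = ∑ m ∈ Icc (n-H) (n+H), if x < m ∧ m ≤ x + H then f m else 0 := by
    intro x hx
    simp only [mem_Ico] at hx
    rw [← sum_filter]
    congr 1
    ext m
    simp only [mem_Ioc, mem_filter, mem_Icc]
    omega
  rw [sum_congr rfl h1, Finset.sum_comm, mul_sum]
  refine sum_congr rfl fun m hm => ?_
  rw [← sum_filter, sum_const, nsmul_eq_mul, countB n H m hH hn hm]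
  have hH' : (H:ℝ) ≠ 0 := Nat.cast_ne_zero.2 hH.ne'
  field_simp

theorem selberg_from_modified_selberg_halved_gain :
    ∃ K : ℝ, ∀ N H : ℕ, 0 < N → 0 < H → 2 * H ≤ N → ∀ f : ℕ → ℝ,
      (∑ x ∈ Ioc N (2 * N), (∑ n ∈ Ioc x (x + H), f n) ^ 2)
        ≤ K * ((⨆ n ∈ Ioc (N - 2 * H) (2 * N + 2 * H), |f n|) *
            Real.sqrt ((N : ℝ) * (H : ℝ) ^ 2 *
              ∑ x ∈ Ioc N (2 * N),
                (∑ n ∈ Icc (x - H) (x + H), (1 - |(n : ℝ) - (x : ℝ)| / H) * f n) ^ 2)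
          + (⨆ n ∈ Ioc (N - 2 * H) (2 * N + 2 * H), |f n|) ^ 2 *
              ((N : ℝ) ^ ((1 : ℝ) / 2) * (H : ℝ) ^ ((5 : ℝ) / 2) + (H : ℝ) ^ 3)) := by
  use 2
  intro N H hN hH hHN f
  set M : ℝ := ⨆ n ∈ Ioc (N - 2 * H) (2 * N + 2 * H), |f n| with hMdef
  set Jt : ℝ := ∑ x ∈ Ioc N (2 * N),
      (∑ n ∈ Icc (x - H) (x + H), (1 - |(n : ℝ) - (x : ℝ)| / H) * f n) ^ 2 with hJt
  set T : ℕ → ℝ := fun n => ∑ m ∈ Icc (n - H) (n + H), (1 - |(m:ℝ) - (n:ℝ)|/H) * f m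
    with hTdef
  set V : ℕ → ℝ := fun n =>
      ∑ x ∈ (Ioc N (2*N)).filter (fun x => x < n ∧ n ≤ x + H), ∑ m ∈ Ioc x (x+H), f m
    with hVdef
  -- basic facts about M
  have hBdd : BddAbove (Set.range fun n => ⨆ _ : n ∈ Ioc (N - 2*H) (2*N + 2*H), |f n|) := by
    refine ⟨∑ m ∈ Ioc (N - 2*H) (2*N + 2*H), |f m|, ?_⟩
    rintro y ⟨n, rfl⟩
    dsimp only
    by_cases hn : n ∈ Ioc (N - 2*H) (2*N + 2*H)
    · have h : (⨆ _ : n ∈ Ioc (N - 2*H) (2*N + 2*H), |f n|) = |f n| := by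
        haveI : Nonempty (n ∈ Ioc (N - 2*H) (2*N + 2*H)) := ⟨hn⟩
        exact ciSup_const
      rw [h]
      exact Finset.single_le_sum (fun m _ => abs_nonneg (f m)) hn
    · have h : (⨆ _ : n ∈ Ioc (N - 2*H) (2*N + 2*H), |f n|) = 0 := by
        haveI : IsEmpty (n ∈ Ioc (N - 2*H) (2*N + 2*H)) := ⟨hn⟩
        exact Real.iSup_of_isEmpty _
      rw [h]
      exact Finset.sum_nonneg (fun m _ => abs_nonneg (f m))
  have hMb : ∀ n ∈ Ioc (N - 2*H) (2*N + 2*H), |f n| ≤ M := by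
    intro n hn
    have h1 : (⨆ _ : n ∈ Ioc (N - 2*H) (2*N + 2*H), |f n|) = |f n| := by
      haveI : Nonempty (n ∈ Ioc (N - 2*H) (2*N + 2*H)) := ⟨hn⟩
      exact ciSup_const
    calc |f n| = _ := h1.symm
    _ ≤ M := le_ciSup hBdd n
  have hM0 : 0 ≤ M := by
    have hNmem : N ∈ Ioc (N - 2*H) (2*N + 2*H) := by
      simp only [mem_Ioc]; omega
    exact le_trans (abs_nonneg (f N)) (hMb N hNmem)
  -- |S x| bound
  have hS : ∀ x ∈ Ioc N (2*N), |∑ m ∈ Ioc x (x+H), f m| ≤ (H:ℝ) * M := by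
    intro x hx
    simp only [mem_Ioc] at hx
    calc |∑ m ∈ Ioc x (x+H), f m| ≤ ∑ m ∈ Ioc x (x+H), |f m| :=
          Finset.abs_sum_le_sum_abs _ _
    _ ≤ ∑ _m ∈ Ioc x (x+H), M := by
        refine Finset.sum_le_sum fun m hm => ?_
        simp only [mem_Ioc] at hm
        exact hMb m (by simp only [mem_Ioc]; omega)
    _ = (H:ℝ) * M := by
        rw [sum_const, Nat.card_Ioc, nsmul_eq_mul]
        congr 2
        omega
  -- |V n| bound
  have hV : ∀ n, |V n| ≤ (H:ℝ) * ((H:ℝ) * M) := by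
    intro n
    have hcard : ((Ioc N (2*N)).filter (fun x => x < n ∧ n ≤ x + H)).card ≤ H := by
      have hsub : (Ioc N (2*N)).filter (fun x => x < n ∧ n ≤ x + H) ⊆ Ico (n-H) n := by
        intro x hx
        simp only [mem_filter, mem_Ioc, mem_Ico] at hx ⊢
        omega
      calc _ ≤ (Ico (n-H) n).card := Finset.card_le_card hsub
      _ ≤ H := by rw [Nat.card_Ico]; omega
    calc |V n| ≤ ∑ x ∈ (Ioc N (2*N)).filter (fun x => x < n ∧ n ≤ x + H),
          |∑ m ∈ Ioc x (x+H), f m| := Finset.abs_sum_le_sum_abs _ _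
    _ ≤ ∑ _x ∈ (Ioc N (2*N)).filter (fun x => x < n ∧ n ≤ x + H), (H:ℝ) * M := by
        refine Finset.sum_le_sum fun x hx => hS x (Finset.mem_of_mem_filter x hx)
    _ = (((Ioc N (2*N)).filter (fun x => x < n ∧ n ≤ x + H)).card : ℝ) * ((H:ℝ)*M) := by
        rw [sum_const, nsmul_eq_mul]
    _ ≤ (H:ℝ) * ((H:ℝ) * M) := by
        have : (((Ioc N (2*N)).filter (fun x => x < n ∧ n ≤ x + H)).card : ℝ) ≤ (H:ℝ) :=
          Nat.cast_le.2 hcard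
        have hHM : 0 ≤ (H:ℝ) * M := mul_nonneg (Nat.cast_nonneg H) hM0
        exact mul_le_mul_of_nonneg_right this hHM
  -- the swap
  have hswap : ∑ x ∈ Ioc N (2 * N), (∑ n ∈ Ioc x (x + H), f n) ^ 2
      = ∑ n ∈ Ioc N (2*N+H), f n * V n := by
    have := swapA N H f (fun x => ∑ m ∈ Ioc x (x+H), f m)
    simpa [sq, hVdef] using this
  -- split
  have hsplit : ∑ n ∈ Ioc N (2*N+H), f n * V n
      = (∑ n ∈ Ioc N (N+H), f n * V n) + (∑ n ∈ Ioc (N+H) (2*N), f n * V n)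
        + (∑ n ∈ Ioc (2*N) (2*N+H), f n * V n) := by
    rw [add_assoc,
      Finset.sum_Ioc_consecutive (fun n => f n * V n)
        (show N+H ≤ 2*N by omega) (show 2*N ≤ 2*N+H by omega),
      Finset.sum_Ioc_consecutive (fun n => f n * V n)
        (show N ≤ N+H by omega) (show N+H ≤ 2*N+H by omega)]
  -- boundary chunks
  have hbound : ∀ n, N - 2*H < n → n ≤ 2*N + 2*H → f n * V n ≤ M * ((H:ℝ) * ((H:ℝ)*M)) := by
    intro n h1 h2
    calc f n * V n ≤ |f n * V n| := le_abs_self _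
    _ = |f n| * |V n| := abs_mul _ _
    _ ≤ M * ((H:ℝ) * ((H:ℝ)*M)) :=
        mul_le_mul (hMb n (by simp only [mem_Ioc]; omega)) (hV n) (abs_nonneg _) hM0
  have hc1 : ∑ n ∈ Ioc N (N+H), f n * V n ≤ M^2 * (H:ℝ)^3 := by
    calc ∑ n ∈ Ioc N (N+H), f n * V n
        ≤ ∑ _n ∈ Ioc N (N+H), M * ((H:ℝ) * ((H:ℝ)*M)) := by
          refine Finset.sum_le_sum fun n hn => ?_
          simp only [mem_Ioc] at hn
          exact hbound n (by omega) (by omega)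
    _ = ((Ioc N (N+H)).card : ℝ) * (M * ((H:ℝ) * ((H:ℝ)*M))) := by
          rw [sum_const, nsmul_eq_mul]
    _ ≤ (H:ℝ) * (M * ((H:ℝ) * ((H:ℝ)*M))) := by
          have : ((Ioc N (N+H)).card : ℝ) ≤ (H:ℝ) := by
            rw [Nat.card_Ioc]; exact Nat.cast_le.2 (by omega)
          have h0 : 0 ≤ M * ((H:ℝ) * ((H:ℝ)*M)) := by positivity
          exact mul_le_mul_of_nonneg_right this h0
    _ = M^2 * (H:ℝ)^3 := by ring
  have hc3 : ∑ n ∈ Ioc (2*N) (2*N+H), f n * V n ≤ M^2 * (H:ℝ)^3 := by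
    calc ∑ n ∈ Ioc (2*N) (2*N+H), f n * V n
        ≤ ∑ _n ∈ Ioc (2*N) (2*N+H), M * ((H:ℝ) * ((H:ℝ)*M)) := by
          refine Finset.sum_le_sum fun n hn => ?_
          simp only [mem_Ioc] at hn
          exact hbound n (by omega) (by omega)
    _ = ((Ioc (2*N) (2*N+H)).card : ℝ) * (M * ((H:ℝ) * ((H:ℝ)*M))) := by
          rw [sum_const, nsmul_eq_mul]
    _ ≤ (H:ℝ) * (M * ((H:ℝ) * ((H:ℝ)*M))) := by
          have : ((Ioc (2*N) (2*N+H)).card : ℝ) ≤ (H:ℝ) := by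
            rw [Nat.card_Ioc]; exact Nat.cast_le.2 (by omega)
          have h0 : 0 ≤ M * ((H:ℝ) * ((H:ℝ)*M)) := by positivity
          exact mul_le_mul_of_nonneg_right this h0
    _ = M^2 * (H:ℝ)^3 := by ring
  -- the central chunk
  have hc2eq : ∑ n ∈ Ioc (N+H) (2*N), f n * V n
      = (H:ℝ) * ∑ n ∈ Ioc (N+H) (2*N), f n * T n := by
    rw [mul_sum]
    refine sum_congr rfl fun n hn => ?_
    simp only [mem_Ioc] at hn
    have hFeq : (Ioc N (2*N)).filter (fun x => x < n ∧ n ≤ x + H) = Ico (n-H) n := by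
      ext x
      simp only [mem_filter, mem_Ioc, mem_Ico]
      omega
    have h1 : V n = (H:ℝ) * T n := by
      simp only [hVdef, hTdef]
      rw [hFeq]
      exact keyC n H hH (by omega) f
    rw [h1]; ring
  have hJt0 : 0 ≤ Jt := by
    rw [hJt]; exact Finset.sum_nonneg fun x _ => sq_nonneg _
  have hJtT : Jt = ∑ x ∈ Ioc N (2*N), T x ^ 2 := rfl
  have hA : ∑ n ∈ Ioc (N+H) (2*N), f n ^ 2 ≤ M^2 * (N:ℝ) := by
    calc ∑ n ∈ Ioc (N+H) (2*N), f n ^ 2 ≤ ∑ _n ∈ Ioc (N+H) (2*N), M^2 := by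
          refine Finset.sum_le_sum fun n hn => ?_
          simp only [mem_Ioc] at hn
          have := hMb n (by simp only [mem_Ioc]; omega)
          calc f n ^ 2 = |f n|^2 := (sq_abs _).symm
          _ ≤ M^2 := pow_le_pow_left₀ (abs_nonneg _) this 2
    _ = ((Ioc (N+H) (2*N)).card : ℝ) * M^2 := by rw [sum_const, nsmul_eq_mul]
    _ ≤ (N:ℝ) * M^2 := by
          refine mul_le_mul_of_nonneg_right ?_ (sq_nonneg M)
          rw [Nat.card_Ioc]; exact Nat.cast_le.2 (by omega)
    _ = M^2 * (N:ℝ) := by ring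
  have hB : ∑ n ∈ Ioc (N+H) (2*N), T n ^ 2 ≤ Jt := by
    rw [hJtT]
    refine Finset.sum_le_sum_of_subset_of_nonneg
      (Finset.Ioc_subset_Ioc_left (by omega)) fun x _ _ => sq_nonneg _
  have hCS : ∑ n ∈ Ioc (N+H) (2*N), f n * T n ≤ M * Real.sqrt N * Real.sqrt Jt := by
    have h2 := Finset.sum_mul_sq_le_sq_mul_sq (Ioc (N+H) (2*N)) f T
    have hB0 : 0 ≤ ∑ n ∈ Ioc (N+H) (2*N), T n ^ 2 :=
      Finset.sum_nonneg fun n _ => sq_nonneg _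
    have h3 : (∑ n ∈ Ioc (N+H) (2*N), f n * T n)^2 ≤ (M^2 * (N:ℝ)) * Jt :=
      le_trans h2 (mul_le_mul hA hB hB0 (by positivity))
    calc ∑ n ∈ Ioc (N+H) (2*N), f n * T n ≤ |∑ n ∈ Ioc (N+H) (2*N), f n * T n| :=
          le_abs_self _
    _ = Real.sqrt ((∑ n ∈ Ioc (N+H) (2*N), f n * T n)^2) := (Real.sqrt_sq_eq_abs _).symm
    _ ≤ Real.sqrt ((M^2 * (N:ℝ)) * Jt) := Real.sqrt_le_sqrt h3
    _ = M * Real.sqrt N * Real.sqrt Jt := by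
        rw [Real.sqrt_mul (by positivity), Real.sqrt_mul (sq_nonneg M),
          Real.sqrt_sq hM0]
  have hc2 : ∑ n ∈ Ioc (N+H) (2*N), f n * V n
      ≤ M * Real.sqrt ((N:ℝ) * (H:ℝ)^2 * Jt) := by
    rw [hc2eq]
    have hsqrt : Real.sqrt ((N:ℝ) * (H:ℝ)^2 * Jt)
        = (H:ℝ) * (Real.sqrt N * Real.sqrt Jt) := by
      rw [Real.sqrt_mul (by positivity), Real.sqrt_mul (Nat.cast_nonneg N),
        Real.sqrt_sq (Nat.cast_nonneg H)]
      ring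
    rw [hsqrt]
    calc (H:ℝ) * ∑ n ∈ Ioc (N+H) (2*N), f n * T n
        ≤ (H:ℝ) * (M * Real.sqrt N * Real.sqrt Jt) :=
          mul_le_mul_of_nonneg_left hCS (Nat.cast_nonneg H)
    _ = M * ((H:ℝ) * (Real.sqrt N * Real.sqrt Jt)) := by ring
  -- combine
  have hP0 : 0 ≤ (N:ℝ) ^ ((1:ℝ)/2) * (H:ℝ) ^ ((5:ℝ)/2) :=
    mul_nonneg (Real.rpow_nonneg (Nat.cast_nonneg N) _) (Real.rpow_nonneg (Nat.cast_nonneg H) _)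
  have hMsqrt0 : 0 ≤ M * Real.sqrt ((N:ℝ) * (H:ℝ)^2 * Jt) :=
    mul_nonneg hM0 (Real.sqrt_nonneg _)
  have hM2P : 0 ≤ M^2 * ((N:ℝ) ^ ((1:ℝ)/2) * (H:ℝ) ^ ((5:ℝ)/2)) :=
    mul_nonneg (sq_nonneg M) hP0
  rw [hswap, hsplit]
  nlinarith [hc1, hc2, hc3, hMsqrt0, hM2P, sq_nonneg M]
end

section
/- Let N, H be positive integers and let f: ℕ→ℂ satisfy f(n) = 0 unless N < n ≤ 2N. Then ∫_{−1/(2H)}^{1/(2H)} |f̂(β)|² dβ ≤ (π/2)⁴ · H^{−4} · ∫_0^1 |f̂(β)|² |û(β)|⁴ dβ, where f̂(β) = Σ_{N<n≤2N} f(n) e(nβ) and û(β) = Σ_{m=1}^{H} e(mβ). -/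
open Finset Real

/-- `e(α) = e^{2πiα}`. -/
noncomputable def eR (α : ℝ) : ℂ := Complex.exp (2 * Real.pi * Complex.I * α)
lemma norm_exp_mul_I_sub_one (θ : ℝ) :
    ‖Complex.exp ((θ : ℂ) * Complex.I) - 1‖ = 2 * |Real.sin (θ / 2)| := by
  set a : ℂ := ((θ / 2 : ℝ) : ℂ) with ha
  have h2 : Complex.exp (a * Complex.I) * Complex.exp (a * Complex.I)
      = Complex.exp ((θ : ℂ) * Complex.I) := by
    rw [← Complex.exp_add]; congr 1; rw [ha]; push_cast; ring
  have h3 : Complex.exp (a * Complex.I) * Complex.exp (-(a * Complex.I)) = 1 := by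
    rw [Complex.exp_neg]
    exact mul_inv_cancel₀ (Complex.exp_ne_zero _)
  have hrw : Complex.exp (-a * Complex.I) = Complex.exp (-(a * Complex.I)) := by
    congr 1; ring
  have hsin : Complex.exp (a * Complex.I) - Complex.exp (-(a * Complex.I))
      = 2 * Complex.I * Complex.sin a := by
    rw [Complex.sin, hrw]
    linear_combination (Complex.exp (a * Complex.I) - Complex.exp (-(a * Complex.I))) * Complex.I_sq
  have key : Complex.exp ((θ : ℂ) * Complex.I) - 1
      = Complex.exp (a * Complex.I) * (2 * Complex.I * Complex.sin a) := by
    linear_combination h3 - h2 + Complex.exp (a * Complex.I) * hsin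
  rw [key, ha, ← Complex.ofReal_sin]
  simp [Complex.norm_exp_ofReal_mul_I, Complex.norm_real, Complex.norm_two, norm_mul]
  rw [show ((θ:ℂ)/2) = ((θ/2:ℝ):ℂ) by push_cast; ring]
  rw [Complex.norm_exp_ofReal_mul_I, ← Complex.ofReal_sin, Complex.norm_real, one_mul, Real.norm_eq_abs]

lemma eR_eq (α : ℝ) : eR α = Complex.exp ((2 * Real.pi * α : ℝ) * Complex.I) := by
  unfold eR; push_cast; ring_nf

lemma eR_add (a b : ℝ) : eR (a + b) = eR a * eR b := by
  unfold eR; rw [← Complex.exp_add]; push_cast; ring_nf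

lemma eR_nat (n : ℕ) : eR n = 1 := by
  unfold eR
  rw [show 2 * (Real.pi : ℂ) * Complex.I * ((n : ℝ) : ℂ) = (n : ℤ) * (2 * Real.pi * Complex.I) by push_cast; ring]
  exact Complex.exp_int_mul_two_pi_mul_I n

lemma eR_pow (m : ℕ) (β : ℝ) : eR (m * β) = eR β ^ m := by
  unfold eR
  rw [← Complex.exp_nat_mul]
  push_cast; ring_nf

lemma norm_eR (α : ℝ) : ‖eR α‖ = 1 := by
  rw [eR_eq]; exact Complex.norm_exp_ofReal_mul_I _

lemma norm_eR_sub_one (x : ℝ) : ‖eR x - 1‖ = 2 * |Real.sin (Real.pi * x)| := by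
  rw [eR_eq, norm_exp_mul_I_sub_one, show (2 * Real.pi * x) / 2 = Real.pi * x by ring]

lemma abs_sin_abs (x : ℝ) : |Real.sin (|x|)| = |Real.sin x| := by
  rcases abs_choice x with h | h <;> rw [h] <;> simp [Real.sin_neg]

lemma normU_ge (H : ℕ) (hH : 0 < H) (β : ℝ) (hβ : |β| ≤ 1 / (2 * H)) :
    2 * H / Real.pi ≤ ‖∑ m ∈ Icc 1 H, eR (m * β)‖ := by
  have hπ : (0:ℝ) < Real.pi := Real.pi_pos
  have hHr : (0:ℝ) < H := by exact_mod_cast hH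
  by_cases hβ0 : β = 0
  · subst hβ0
    have : ∀ m ∈ Icc 1 H, eR ((m:ℝ) * 0) = 1 := fun m _ => by
      rw [mul_zero, show (0:ℝ) = ((0:ℕ):ℝ) by norm_num, eR_nat]
    rw [Finset.sum_congr rfl this, Finset.sum_const, Nat.card_Icc]
    simp only [nsmul_eq_mul, mul_one]
    rw [show ‖((H + 1 - 1 : ℕ) : ℂ)‖ = (H:ℝ) by simp]
    rw [div_le_iff₀ hπ]
    nlinarith [Real.pi_gt_three]
  · have ht0 : 0 < |β| := abs_pos.mpr hβ0
    set t := |β| with htdef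
    have ht1 : t ≤ 1 / (2 * H) := hβ
    have h1H : (1:ℝ) ≤ H := by exact_mod_cast hH
    have h2H : (2:ℝ) ≤ 2 * H := by linarith
    have ht2 : t ≤ 1 / 2 := ht1.trans (one_div_le_one_div_of_le (by norm_num) h2H)
    have hHt : (H:ℝ) * t ≤ 1 / 2 := by
      rw [le_div_iff₀ (by positivity : (0:ℝ) < 2 * (H:ℝ))] at ht1
      nlinarith
    have hz : eR β ≠ 1 := by
      intro h
      rw [eR_eq, Complex.exp_eq_one_iff] at h
      obtain ⟨n, hn⟩ := h
      have hne : (2 * (Real.pi:ℂ) * Complex.I) ≠ 0 := by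
        simp [Real.pi_ne_zero, Complex.I_ne_zero]
      have hβn : (β : ℂ) = (n : ℂ) := by
        apply mul_left_cancel₀ hne
        push_cast at hn
        linear_combination hn
      have hβn' : β = (n : ℝ) := by exact_mod_cast hβn
      have hlt : |β| < 1 := lt_of_le_of_lt ht2 (by norm_num)
      rw [hβn'] at hlt hβ0
      have : |n| < 1 := by exact_mod_cast hlt
      have : n = 0 := Int.abs_lt_one_iff.mp this
      simp [this] at hβ0
    have hsum : ∑ m ∈ Icc 1 H, eR ((m:ℝ) * β) = (eR β ^ (H+1) - eR β ^ 1) / (eR β - 1) := by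
      have hc : ∀ m ∈ Icc 1 H, eR ((m:ℝ) * β) = eR β ^ m := fun m _ => eR_pow m β
      rw [Finset.sum_congr rfl hc, show Icc 1 H = Ico 1 (H+1) from (Finset.Ico_add_one_right_eq_Icc 1 H).symm,
        geom_sum_Ico hz (by omega)]
    have hnorm : ‖∑ m ∈ Icc 1 H, eR ((m:ℝ) * β)‖
        = |Real.sin (Real.pi * ((H:ℝ) * β))| / |Real.sin (Real.pi * β)| := by
      rw [hsum, norm_div, pow_one,
        show eR β ^ (H+1) - eR β = eR β * (eR β ^ H - 1) by ring,
        norm_mul, norm_eR, one_mul, ← eR_pow, norm_eR_sub_one, norm_eR_sub_one,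
        mul_div_mul_left _ _ (two_ne_zero)]
    rw [hnorm]
    have hsinpos : 0 < Real.sin (Real.pi * t) :=
      Real.sin_pos_of_pos_of_lt_pi (by positivity) (by nlinarith)
    have habs1 : |Real.sin (Real.pi * β)| = Real.sin (Real.pi * t) := by
      rw [← abs_sin_abs (Real.pi * β), abs_mul, abs_of_pos hπ, ← htdef,
        abs_of_pos hsinpos]
    have hsinH : 0 ≤ Real.sin (Real.pi * ((H:ℝ) * t)) :=
      Real.sin_nonneg_of_nonneg_of_le_pi (by positivity) (by nlinarith)
    have habs2 : |Real.sin (Real.pi * ((H:ℝ) * β))| = Real.sin (Real.pi * ((H:ℝ) * t)) := by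
      rw [← abs_sin_abs (Real.pi * ((H:ℝ) * β)), abs_mul, abs_mul, abs_of_pos hπ,
        abs_of_pos hHr, ← htdef, abs_of_nonneg hsinH]
    rw [habs1, habs2, le_div_iff₀ hsinpos]
    have hs1 : 2 / Real.pi * (Real.pi * ((H:ℝ) * t)) ≤ Real.sin (Real.pi * ((H:ℝ) * t)) :=
      Real.mul_le_sin (by positivity) (by nlinarith)
    have hs2 : Real.sin (Real.pi * t) ≤ Real.pi * t := Real.sin_le (by positivity)
    have e1 : 2 * (H:ℝ) / Real.pi * (Real.pi * t) = 2 / Real.pi * (Real.pi * ((H:ℝ) * t)) := by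
      field_simp
    have e2 := mul_le_mul_of_nonneg_left hs2 (by positivity : (0:ℝ) ≤ 2 * (H:ℝ) / Real.pi)
    linarith

lemma continuous_eR_comp (r : ℝ) : Continuous fun β : ℝ => eR (r * β) := by
  unfold eR; fun_prop

theorem modified_gallagher_lemma
    (N H : ℕ) (hN : 0 < N) (hH : 0 < H) (f : ℕ → ℂ)
    (hsupp : ∀ n : ℕ, f n ≠ 0 → N < n ∧ n ≤ 2 * N) :
    (∫ β in (-(1 / (2 * (H : ℝ))))..(1 / (2 * (H : ℝ))),
        ‖∑ n ∈ Ioc N (2 * N), f n * eR (n * β)‖ ^ 2)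
      ≤ (Real.pi / 2) ^ 4 / (H : ℝ) ^ 4 *
        ∫ β in (0 : ℝ)..1,
          ‖∑ n ∈ Ioc N (2 * N), f n * eR (n * β)‖ ^ 2 *
            ‖∑ m ∈ Icc 1 H, eR (m * β)‖ ^ 4 := by
  have hπ : (0:ℝ) < Real.pi := Real.pi_pos
  have hHr : (0:ℝ) < H := by exact_mod_cast hH
  have h1H : (1:ℝ) ≤ H := by exact_mod_cast hH
  set a : ℝ := 1 / (2 * (H:ℝ)) with ha
  set c : ℝ := (Real.pi / 2) ^ 4 / (H : ℝ) ^ 4 with hc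
  have ha0 : 0 < a := by rw [ha]; positivity
  have hc0 : 0 < c := by rw [hc]; positivity
  have ha2 : 2 * a ≤ 1 := by
    rw [ha, mul_one_div, div_le_one (by positivity : (0:ℝ) < 2 * (H:ℝ))]
    linarith
  -- continuity
  have hcontS : Continuous fun β : ℝ => ∑ n ∈ Ioc N (2 * N), f n * eR ((n:ℝ) * β) := by
    apply continuous_finset_sum
    exact fun i _ => continuous_const.mul (continuous_eR_comp i)
  have hcontU : Continuous fun β : ℝ => ∑ m ∈ Icc 1 H, eR ((m:ℝ) * β) := by
    apply continuous_finset_sum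
    exact fun i _ => continuous_eR_comp i
  have hFcont : Continuous fun β : ℝ =>
      ‖∑ n ∈ Ioc N (2 * N), f n * eR ((n:ℝ) * β)‖ ^ 2 := (hcontS.norm).pow 2
  have hGcont : Continuous fun β : ℝ =>
      ‖∑ n ∈ Ioc N (2 * N), f n * eR ((n:ℝ) * β)‖ ^ 2 *
        ‖∑ m ∈ Icc 1 H, eR ((m:ℝ) * β)‖ ^ 4 :=
    hFcont.mul ((hcontU.norm).pow 4)
  -- pointwise bound on [-a, a]
  have hpt : ∀ x ∈ Set.Icc (-a) a,
      ‖∑ n ∈ Ioc N (2 * N), f n * eR ((n:ℝ) * x)‖ ^ 2 ≤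
        c * (‖∑ n ∈ Ioc N (2 * N), f n * eR ((n:ℝ) * x)‖ ^ 2 *
          ‖∑ m ∈ Icc 1 H, eR ((m:ℝ) * x)‖ ^ 4) := by
    intro x hx
    have hux : 2 * H / Real.pi ≤ ‖∑ m ∈ Icc 1 H, eR ((m:ℝ) * x)‖ :=
      normU_ge H hH x (abs_le.mpr ⟨by simpa [ha] using hx.1, by simpa [ha] using hx.2⟩)
    have h4 : (2 * (H:ℝ) / Real.pi) ^ 4 ≤ ‖∑ m ∈ Icc 1 H, eR ((m:ℝ) * x)‖ ^ 4 :=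
      pow_le_pow_left₀ (by positivity) hux 4
    have hid : c * (2 * (H:ℝ) / Real.pi) ^ 4 = 1 := by
      rw [hc]; field_simp
    set X : ℝ := ‖∑ n ∈ Ioc N (2 * N), f n * eR ((n:ℝ) * x)‖ ^ 2 with hX
    have hX0 : 0 ≤ X := by rw [hX]; positivity
    have step : X * ((2 * (H:ℝ) / Real.pi) ^ 4 * c)
        ≤ X * (‖∑ m ∈ Icc 1 H, eR ((m:ℝ) * x)‖ ^ 4 * c) :=
      mul_le_mul_of_nonneg_left (mul_le_mul_of_nonneg_right h4 hc0.le) hX0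
    calc X = X * ((2 * (H:ℝ) / Real.pi) ^ 4 * c) := by
            rw [mul_comm ((2 * (H:ℝ) / Real.pi) ^ 4) c, hid, mul_one]
      _ ≤ X * (‖∑ m ∈ Icc 1 H, eR ((m:ℝ) * x)‖ ^ 4 * c) := step
      _ = c * (X * ‖∑ m ∈ Icc 1 H, eR ((m:ℝ) * x)‖ ^ 4) := by ring
  -- step 1
  have int1 : (∫ β in (-a)..a, ‖∑ n ∈ Ioc N (2 * N), f n * eR ((n:ℝ) * β)‖ ^ 2)
      ≤ ∫ β in (-a)..a, c * (‖∑ n ∈ Ioc N (2 * N), f n * eR ((n:ℝ) * β)‖ ^ 2 *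
          ‖∑ m ∈ Icc 1 H, eR ((m:ℝ) * β)‖ ^ 4) :=
    intervalIntegral.integral_mono_on (by linarith)
      (hFcont.intervalIntegrable _ _) ((continuous_const.mul hGcont).intervalIntegrable _ _) hpt
  have int2 : (∫ β in (-a)..a, c * (‖∑ n ∈ Ioc N (2 * N), f n * eR ((n:ℝ) * β)‖ ^ 2 *
          ‖∑ m ∈ Icc 1 H, eR ((m:ℝ) * β)‖ ^ 4))
      = c * ∫ β in (-a)..a, ‖∑ n ∈ Ioc N (2 * N), f n * eR ((n:ℝ) * β)‖ ^ 2 *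
          ‖∑ m ∈ Icc 1 H, eR ((m:ℝ) * β)‖ ^ 4 :=
    intervalIntegral.integral_const_mul c _
  -- periodicity
  have hperG : Function.Periodic (fun β : ℝ =>
      ‖∑ n ∈ Ioc N (2 * N), f n * eR ((n:ℝ) * β)‖ ^ 2 *
        ‖∑ m ∈ Icc 1 H, eR ((m:ℝ) * β)‖ ^ 4) 1 := by
    intro β
    have h1 : ∀ k : ℕ, eR ((k:ℝ) * (β + 1)) = eR ((k:ℝ) * β) := fun k => by
      rw [show (k:ℝ) * (β + 1) = (k:ℝ) * β + (k:ℕ) by push_cast; ring, eR_add, eR_nat, mul_one]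
    have e1 : ∑ n ∈ Ioc N (2 * N), f n * eR ((n:ℝ) * (β + 1))
        = ∑ n ∈ Ioc N (2 * N), f n * eR ((n:ℝ) * β) :=
      Finset.sum_congr rfl (fun n _ => by rw [h1 n])
    have e2 : ∑ m ∈ Icc 1 H, eR ((m:ℝ) * (β + 1))
        = ∑ m ∈ Icc 1 H, eR ((m:ℝ) * β) :=
      Finset.sum_congr rfl (fun m _ => by rw [h1 m])
    simp only [e1, e2]
  have int3 : (∫ β in (-a)..(-a + 1),
      ‖∑ n ∈ Ioc N (2 * N), f n * eR ((n:ℝ) * β)‖ ^ 2 *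
        ‖∑ m ∈ Icc 1 H, eR ((m:ℝ) * β)‖ ^ 4)
      = ∫ β in (0:ℝ)..1,
      ‖∑ n ∈ Ioc N (2 * N), f n * eR ((n:ℝ) * β)‖ ^ 2 *
        ‖∑ m ∈ Icc 1 H, eR ((m:ℝ) * β)‖ ^ 4 := by
    simpa using hperG.intervalIntegral_add_eq (-a) 0
  have hsplit := intervalIntegral.integral_add_adjacent_intervals
    (hGcont.intervalIntegrable (μ := MeasureTheory.volume) (-a) a)
    (hGcont.intervalIntegrable (μ := MeasureTheory.volume) a (-a + 1))
  have hnn : 0 ≤ ∫ β in a..(-a + 1),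
      ‖∑ n ∈ Ioc N (2 * N), f n * eR ((n:ℝ) * β)‖ ^ 2 *
        ‖∑ m ∈ Icc 1 H, eR ((m:ℝ) * β)‖ ^ 4 :=
    intervalIntegral.integral_nonneg (by linarith) (fun u _ => by positivity)
  have int4 : (∫ β in (-a)..a,
      ‖∑ n ∈ Ioc N (2 * N), f n * eR ((n:ℝ) * β)‖ ^ 2 *
        ‖∑ m ∈ Icc 1 H, eR ((m:ℝ) * β)‖ ^ 4)
      ≤ ∫ β in (0:ℝ)..1,
      ‖∑ n ∈ Ioc N (2 * N), f n * eR ((n:ℝ) * β)‖ ^ 2 *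
        ‖∑ m ∈ Icc 1 H, eR ((m:ℝ) * β)‖ ^ 4 := by
    rw [← int3]; linarith
  calc (∫ β in (-a)..a, ‖∑ n ∈ Ioc N (2 * N), f n * eR ((n:ℝ) * β)‖ ^ 2)
      ≤ ∫ β in (-a)..a, c * (‖∑ n ∈ Ioc N (2 * N), f n * eR ((n:ℝ) * β)‖ ^ 2 *
          ‖∑ m ∈ Icc 1 H, eR ((m:ℝ) * β)‖ ^ 4) := int1
    _ = c * ∫ β in (-a)..a, ‖∑ n ∈ Ioc N (2 * N), f n * eR ((n:ℝ) * β)‖ ^ 2 *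
          ‖∑ m ∈ Icc 1 H, eR ((m:ℝ) * β)‖ ^ 4 := int2
    _ ≤ c * ∫ β in (0:ℝ)..1, ‖∑ n ∈ Ioc N (2 * N), f n * eR ((n:ℝ) * β)‖ ^ 2 *
          ‖∑ m ∈ Icc 1 H, eR ((m:ℝ) * β)‖ ^ 4 := mul_le_mul_of_nonneg_left int4 hc0.le
end

section
/- Let f = a + b where: a: ℕ→ℝ is the restriction to positive integers of a C¹ function A: [1,∞)→ℝ such that for every ε>0 there is C_ε with |A'(t)| ≤ C_ε t^{ε−1} for all t ≥ 1; f is essentially bounded (for every ε>0, |f(n)| ≤ C_ε n^ε for all n ≥ 1, and f(m)=0 for m ≤ 0); and there is α ∈ [0,1) such that for every ε>0, |Σ_{n≤x} b(n)| ≤ C_ε x^{α+ε} for all x ≥ 1. Then for every ε>0, uniformly for positive integers N, H with H ≤ N, one has | Σ_{h=1}^{H} Σ_{N<n≤2N} f(n) f(n−h) − H·Σ_{N<x≤2N} a(x)² | ≪_ε N^{ε} ( N^{1/2} J^{1/2} + N^{α} H + H² ), where J = Σ_{N<x≤2N} ( Σ_{x<n≤x+H} b(n) )². -/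
open Finset

lemma Ioc_succ_singleton (R : ℕ) : Ioc R (R+1) = {R+1} := by
  ext x; simp only [mem_Ioc, mem_singleton]; omega

lemma telescope_Ioc (φ : ℕ → ℝ) (L R : ℕ) (h : L ≤ R) :
    ∑ m ∈ Ioc L R, (φ (m+1) - φ m) = φ (R+1) - φ (L+1) := by
  induction R, h using Nat.le_induction with
  | base => simp
  | succ R hLR ih =>
      rw [← Finset.sum_Ioc_consecutive _ (by omega : L ≤ R) (by omega : R ≤ R+1), ih,
        Ioc_succ_singleton]
      simp only [Finset.sum_singleton]; ring

lemma abel_Ioc (g B : ℕ → ℝ) (L R : ℕ) (h : L < R) :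
    ∑ m ∈ Ioc L R, g m * (B m - B (m-1))
      = g R * B R - g (L+1) * B L + ∑ m ∈ Ioc L (R-1), (g m - g (m+1)) * B m := by
  induction R, h using Nat.le_induction with
  | base =>
      rw [Ioc_succ_singleton]
      simp only [Finset.sum_singleton, Finset.sum_empty, Finset.Ioc_self, Nat.succ_eq_add_one,
        Nat.add_sub_cancel]; ring
  | succ R hLR ih =>
      rw [← Finset.sum_Ioc_consecutive _ (by omega : L ≤ R) (by omega : R ≤ R+1), ih,
        Ioc_succ_singleton, show (R+1)-1 = R by omega,
        ← Finset.sum_Ioc_consecutive _ (by omega : L ≤ R-1) (by omega : R-1 ≤ R),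
        show Ioc (R-1) R = {R} by ext x; simp only [mem_Ioc, mem_singleton]; omega]
      simp [show R+1-1 = R by omega]; ring

lemma var_bound (A A' : ℝ → ℝ) (hderiv : ∀ t : ℝ, 1 ≤ t → HasDerivAt A (A' t) t)
    (hA'cont : ContinuousOn A' (Set.Ici 1)) (Ca δ : ℝ) (hδ : 0 < δ)
    (hCa : ∀ t : ℝ, 1 ≤ t → |A' t| ≤ Ca * t ^ (δ-1)) :
    ∀ s t : ℝ, 1 ≤ s → s ≤ t → |A t - A s| ≤ Ca/δ * (t^δ - s^δ) := by
  intro s t hs hst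
  have huIcc : Set.uIcc s t = Set.Icc s t := Set.uIcc_of_le hst
  have hsub : Set.Icc s t ⊆ Set.Ici (1:ℝ) := fun x hx => le_trans hs hx.1
  have hint : IntervalIntegrable A' MeasureTheory.volume s t := by
    apply ContinuousOn.intervalIntegrable
    rw [huIcc]; exact hA'cont.mono hsub
  have hintg : ContinuousOn (fun u : ℝ => Ca * u ^ (δ-1)) (Set.Icc s t) := by
    apply continuousOn_const.mul
    apply ContinuousOn.rpow_const continuousOn_id
    intro x hx
    have h1x : (1:ℝ) ≤ x := hsub hx
    exact Or.inl (by simp only [id]; linarith)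
  have hftc : ∫ u in s..t, A' u = A t - A s := by
    apply intervalIntegral.integral_eq_sub_of_hasDerivAt
    · intro x hx
      rw [huIcc] at hx
      exact hderiv x (hsub hx)
    · exact hint
  have h1 : |A t - A s| ≤ ∫ u in s..t, |A' u| := by
    rw [← hftc]; exact intervalIntegral.abs_integral_le_integral_abs hst
  have h2 : (∫ u in s..t, |A' u|) ≤ ∫ u in s..t, Ca * u ^ (δ-1) := by
    apply intervalIntegral.integral_mono_on hst hint.abs
    · apply ContinuousOn.intervalIntegrable; rw [huIcc]; exact hintg
    · intro x hx; exact hCa x (hsub hx)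
  have h3 : (∫ u in s..t, Ca * u ^ (δ-1)) = Ca/δ * (t^δ - s^δ) := by
    rw [intervalIntegral.integral_const_mul, integral_rpow (Or.inl (by linarith))]
    rw [show δ - 1 + 1 = δ by ring]
    field_simp
  linarith [h1, h2, h3.le, h3.ge]

lemma abel_bound (g b B : ℕ → ℝ) (L R : ℕ) (hLR : L < R)
    (hbB : ∀ m : ℕ, 1 ≤ m → b m = B m - B (m-1))
    (G M V : ℝ) (hG0 : 0 ≤ G) (hM0 : 0 ≤ M)
    (hG : ∀ m : ℕ, L < m → m ≤ R → |g m| ≤ G)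
    (hM : ∀ m : ℕ, m ≤ R → |B m| ≤ M)
    (hV : ∑ m ∈ Ioc L (R-1), |g m - g (m+1)| ≤ V) :
    |∑ m ∈ Ioc L R, g m * b m| ≤ 2*G*M + V*M := by
  have h1 : ∑ m ∈ Ioc L R, g m * b m = ∑ m ∈ Ioc L R, g m * (B m - B (m-1)) :=
    Finset.sum_congr rfl (fun m hm => by
      rw [hbB m (by simp only [mem_Ioc] at hm; omega)])
  rw [h1, abel_Ioc g B L R hLR]
  have hb1 : |g R * B R| ≤ G * M := by
    rw [abs_mul]
    exact mul_le_mul (hG R hLR le_rfl) (hM R le_rfl) (abs_nonneg _) hG0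
  have hb2 : |g (L+1) * B L| ≤ G * M := by
    rw [abs_mul]
    exact mul_le_mul (hG (L+1) (by omega) (by omega)) (hM L (by omega)) (abs_nonneg _) hG0
  have hb3 : |∑ m ∈ Ioc L (R-1), (g m - g (m+1)) * B m| ≤ V * M := by
    calc |∑ m ∈ Ioc L (R-1), (g m - g (m+1)) * B m|
        ≤ ∑ m ∈ Ioc L (R-1), |(g m - g (m+1)) * B m| := Finset.abs_sum_le_sum_abs _ _
      _ ≤ ∑ m ∈ Ioc L (R-1), |g m - g (m+1)| * M := by
          apply Finset.sum_le_sum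
          intro m hm
          rw [abs_mul]
          exact mul_le_mul_of_nonneg_left
            (hM m (by simp only [mem_Ioc] at hm; omega)) (abs_nonneg _)
      _ = (∑ m ∈ Ioc L (R-1), |g m - g (m+1)|) * M := by rw [Finset.sum_mul]
      _ ≤ V * M := mul_le_mul_of_nonneg_right hV hM0
  calc |g R * B R - g (L+1) * B L + ∑ m ∈ Ioc L (R-1), (g m - g (m+1)) * B m|
      ≤ |g R * B R - g (L+1) * B L| + |∑ m ∈ Ioc L (R-1), (g m - g (m+1)) * B m| :=
        abs_add_le _ _
    _ ≤ |g R * B R| + |g (L+1) * B L| + |∑ m ∈ Ioc L (R-1), (g m - g (m+1)) * B m| := by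
        linarith [abs_sub (g R * B R) (g (L+1) * B L)]
    _ ≤ 2*G*M + V*M := by linarith

set_option maxHeartbeats 1000000 in
theorem first_generation_deviation_bound
    (f a b : ℕ → ℝ) (A A' : ℝ → ℝ)
    (hab : ∀ n : ℕ, f n = a n + b n)
    (hAa : ∀ n : ℕ, 1 ≤ n → a n = A n)
    (hderiv : ∀ t : ℝ, 1 ≤ t → HasDerivAt A (A' t) t)
    (hA'cont : ContinuousOn A' (Set.Ici 1))
    (hA' : ∀ ε : ℝ, 0 < ε → ∃ C : ℝ, ∀ t : ℝ, 1 ≤ t → |A' t| ≤ C * t ^ (ε - 1))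
    (hf0 : f 0 = 0)
    (hfb : ∀ ε : ℝ, 0 < ε → ∃ C : ℝ, ∀ n : ℕ, 1 ≤ n → |f n| ≤ C * (n : ℝ) ^ ε)
    (α : ℝ) (hα0 : 0 ≤ α) (hα1 : α < 1)
    (hb : ∀ ε : ℝ, 0 < ε → ∃ C : ℝ, ∀ x : ℝ, 1 ≤ x →
      |∑ n ∈ Icc 1 ⌊x⌋₊, b n| ≤ C * x ^ (α + ε)) :
    ∀ ε : ℝ, 0 < ε → ∃ C : ℝ, ∀ N H : ℕ, 0 < N → 0 < H → H ≤ N →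
      |(∑ h ∈ Icc 1 H, ∑ n ∈ Ioc N (2 * N), f n * f (n - h))
          - (H : ℝ) * ∑ x ∈ Ioc N (2 * N), (a x) ^ 2|
        ≤ C * (N : ℝ) ^ ε *
          ((N : ℝ) ^ ((1 : ℝ) / 2) *
              Real.sqrt (∑ x ∈ Ioc N (2 * N), (∑ n ∈ Ioc x (x + H), b n) ^ 2)
            + (N : ℝ) ^ α * H + (H : ℝ) ^ 2) := by
  intro ε hε
  obtain ⟨δ, hδdef⟩ : ∃ y : ℝ, y = ε/2 := ⟨_, rfl⟩
  have hδ : 0 < δ := by rw [hδdef]; positivity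
  obtain ⟨Ca, hCa⟩ := hA' δ hδ
  obtain ⟨Cf, hCf⟩ := hfb δ hδ
  obtain ⟨Cb, hCb⟩ := hb δ hδ
  have hCa0 : 0 ≤ Ca := by
    have := hCa 1 le_rfl
    rw [Real.one_rpow, mul_one] at this
    exact le_trans (abs_nonneg _) this
  have hCf0 : 0 ≤ Cf := by
    have := hCf 1 le_rfl
    simp only [Nat.cast_one, Real.one_rpow, mul_one] at this
    exact le_trans (abs_nonneg _) this
  have hCb0 : 0 ≤ Cb := by
    have := hCb 1 le_rfl
    simp only [Real.one_rpow, mul_one] at this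
    exact le_trans (abs_nonneg _) this
  have hvar := var_bound A A' hderiv hA'cont Ca δ hδ hCa
  -- sup bound for A
  obtain ⟨Ka, hKadef⟩ : ∃ y : ℝ, y = |A 1| + Ca/δ := ⟨_, rfl⟩
  have hKa0 : 0 ≤ Ka := by rw [hKadef]; positivity
  have hKa : ∀ t : ℝ, 1 ≤ t → |A t| ≤ Ka * t ^ δ := by
    intro t ht
    have h1 : |A t - A 1| ≤ Ca/δ * (t^δ - 1^δ) := hvar 1 t le_rfl ht
    rw [Real.one_rpow] at h1
    have h2 : (1:ℝ) ≤ t ^ δ := Real.one_le_rpow ht hδ.le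
    have h3 : |A t| ≤ |A 1| + |A t - A 1| := by
      have := abs_add_le (A 1) (A t - A 1); simp at this ⊢; linarith [this]
    have h4 : (0:ℝ) ≤ Ca/δ := by positivity
    calc |A t| ≤ |A 1| + Ca/δ * (t^δ - 1) := by linarith
      _ ≤ |A 1| * t^δ + Ca/δ * t^δ := by nlinarith [abs_nonneg (A 1)]
      _ = Ka * t^δ := by rw [hKadef]; ring
  -- bound for b
  obtain ⟨Kb, hKbdef⟩ : ∃ y : ℝ, y = Cf + Ka := ⟨_, rfl⟩
  have hKb0 : 0 ≤ Kb := by rw [hKbdef]; linarith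
  have hbK : ∀ n : ℕ, 1 ≤ n → |b n| ≤ Kb * (n:ℝ) ^ δ := by
    intro n hn
    have h1 : (1:ℝ) ≤ (n:ℝ) := by exact_mod_cast hn
    have h2 : b n = f n - a n := by rw [hab n]; ring
    have h3 : |a n| ≤ Ka * (n:ℝ)^δ := by rw [hAa n hn]; exact hKa _ h1
    have h4 := hCf n hn
    calc |b n| ≤ |f n| + |a n| := by rw [h2]; exact abs_sub _ _
      _ ≤ Kb * (n:ℝ)^δ := by rw [hKbdef]; nlinarith []
  -- prefix sums of b
  obtain ⟨B, hBdef⟩ : ∃ g : ℕ → ℝ, g = fun m => ∑ k ∈ Icc 1 m, b k := ⟨_, rfl⟩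
  have hIccIoc : ∀ w : ℕ, Icc 1 w = Ioc 0 w := by
    intro w; ext x; simp only [mem_Icc, mem_Ioc]; omega
  have hbB : ∀ m : ℕ, 1 ≤ m → b m = B m - B (m-1) := by
    intro m hm
    have : B ((m-1)+1) = B (m-1) + b ((m-1)+1) := by
      simp only [hBdef]; exact Finset.sum_Icc_succ_top (by omega) b
    rw [show (m-1)+1 = m by omega] at this
    linarith
  have hBdiff : ∀ u v : ℕ, u ≤ v → ∑ m ∈ Ioc u v, b m = B v - B u := by
    intro u v huv
    have := Finset.sum_Ioc_consecutive b (Nat.zero_le u) huv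
    simp only [hBdef, hIccIoc]; linarith
  have hBle : ∀ (m : ℕ) (x : ℝ), 1 ≤ x → (m:ℝ) ≤ x → |B m| ≤ Cb * x ^ (α+δ) := by
    intro m x hx hmx
    rcases Nat.eq_zero_or_pos m with hm | hm
    · subst hm
      have : B 0 = 0 := by simp [hBdef]
      rw [this, abs_zero]; positivity
    · have h1 := hCb (m:ℝ) (by exact_mod_cast hm)
      rw [Nat.floor_natCast] at h1
      calc |B m| ≤ Cb * (m:ℝ)^(α+δ) := by simp only [hBdef]; exact h1
        _ ≤ Cb * x^(α+δ) := by
            apply mul_le_mul_of_nonneg_left _ hCb0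
            exact Real.rpow_le_rpow (Nat.cast_nonneg m) hmx (by positivity)
  -- now the main business
  refine ⟨(Ka*(Ca/δ))*(2^δ*2^δ) + 2*((2*Ka + Ca/δ)*Cb*(2^δ*2^(α+δ)))
    + Kb*2^δ + 4*Kb*Cb*(2^δ*2^(α+δ)), ?_⟩
  intro N H hN hH hHN
  have hN0 : (0:ℝ) < N := by exact_mod_cast hN
  have hN1 : (1:ℝ) ≤ N := by exact_mod_cast hN
  obtain ⟨T, hTdef⟩ : ∃ y : ℝ, y = 2*(N:ℝ) := ⟨_, rfl⟩
  have hT1 : (1:ℝ) ≤ T := by rw [hTdef]; linarith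
  have hcast2N : ((2*N : ℕ):ℝ) = T := by rw [hTdef]; push_cast; ring
  have hcastle : ∀ m : ℕ, m ≤ 2*N → (m:ℝ) ≤ T := by
    intro m hm; rw [← hcast2N]; exact_mod_cast hm
  have ham : ∀ m : ℕ, 1 ≤ m → m ≤ 2*N → |a m| ≤ Ka * T^δ := by
    intro m h1 h2
    have hm1 : (1:ℝ) ≤ (m:ℝ) := by exact_mod_cast h1
    calc |a m| = |A m| := by rw [hAa m h1]
      _ ≤ Ka * (m:ℝ)^δ := hKa _ hm1
      _ ≤ Ka * T^δ := by
          apply mul_le_mul_of_nonneg_left _ hKa0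
          exact Real.rpow_le_rpow (by positivity) (hcastle m h2) hδ.le
  have hbm : ∀ m : ℕ, 1 ≤ m → m ≤ 2*N → |b m| ≤ Kb * T^δ := by
    intro m h1 h2
    calc |b m| ≤ Kb * (m:ℝ)^δ := hbK m h1
      _ ≤ Kb * T^δ := by
          apply mul_le_mul_of_nonneg_left _ hKb0
          exact Real.rpow_le_rpow (by positivity) (hcastle m h2) hδ.le
  have hBm : ∀ m : ℕ, m ≤ 2*N → |B m| ≤ Cb * T^(α+δ) :=
    fun m hm => hBle m T hT1 (hcastle m hm)
  -- decomposition
  have hdecomp : (∑ h ∈ Icc 1 H, ∑ n ∈ Ioc N (2*N), f n * f (n-h))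
      - (H:ℝ) * ∑ x ∈ Ioc N (2*N), a x^2
    = (∑ h ∈ Icc 1 H, ∑ n ∈ Ioc N (2*N), a n * (a (n-h) - a n))
      + (∑ h ∈ Icc 1 H, ∑ n ∈ Ioc N (2*N), a n * b (n-h))
      + (∑ h ∈ Icc 1 H, ∑ n ∈ Ioc N (2*N), b n * a (n-h))
      + (∑ h ∈ Icc 1 H, ∑ n ∈ Ioc N (2*N), b n * b (n-h)) := by
    have step : ∀ h ∈ Icc 1 H, ∑ n ∈ Ioc N (2*N), f n * f (n-h)
        = (∑ n ∈ Ioc N (2*N), a n ^ 2)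
          + ((∑ n ∈ Ioc N (2*N), a n * (a (n-h) - a n))
          + (∑ n ∈ Ioc N (2*N), a n * b (n-h))
          + (∑ n ∈ Ioc N (2*N), b n * a (n-h))
          + (∑ n ∈ Ioc N (2*N), b n * b (n-h))) := by
      intro h hh
      rw [← Finset.sum_add_distrib, ← Finset.sum_add_distrib, ← Finset.sum_add_distrib,
        ← Finset.sum_add_distrib]
      apply Finset.sum_congr rfl
      intro n hn
      rw [hab n, hab (n-h)]; ring
    rw [Finset.sum_congr rfl step, Finset.sum_add_distrib, Finset.sum_const, Nat.card_Icc,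
      Nat.add_sub_cancel, nsmul_eq_mul, Finset.sum_add_distrib, Finset.sum_add_distrib,
      Finset.sum_add_distrib]
    ring
  -- shift lemma
  have hshift : ∀ h : ℕ, h ≤ N → ∀ (ψ : ℕ → ℝ),
      ∑ n ∈ Ioc N (2*N), ψ (n-h) = ∑ m ∈ Ioc (N-h) (2*N-h), ψ m := by
    intro h hh ψ
    have hmap : Ioc N (2*N) = (Ioc (N-h) (2*N-h)).map (addRightEmbedding h) := by
      rw [Finset.map_add_right_Ioc]; congr 1 <;> omega
    rw [hmap, Finset.sum_map]
    apply Finset.sum_congr rfl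
    intro m hm
    simp only [addRightEmbedding_apply]
    rw [show m + h - h = m by omega]
  -- E1 bound
  have hE1 : |∑ h ∈ Icc 1 H, ∑ n ∈ Ioc N (2*N), a n * (a (n-h) - a n)|
      ≤ (H:ℝ) * ((Ka*T^δ) * ((Ca/δ) * ((H:ℝ)*T^δ))) := by
    have per : ∀ h ∈ Icc 1 H, |∑ n ∈ Ioc N (2*N), a n * (a (n-h) - a n)|
        ≤ (Ka*T^δ) * ((Ca/δ) * ((H:ℝ)*T^δ)) := by
      intro h hh
      simp only [mem_Icc] at hh
      have hsum : ∑ n ∈ Ioc N (2*N), ((n:ℝ)^δ - ((n-h:ℕ):ℝ)^δ) ≤ (h:ℝ) * T^δ := by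
        rw [Finset.sum_sub_distrib, hshift h (by omega) (fun m => (m:ℝ)^δ)]
        have hs1 : (∑ m ∈ Ioc (N-h) N, ((m:ℕ):ℝ)^δ) + ∑ m ∈ Ioc N (2*N-h), ((m:ℕ):ℝ)^δ
            = ∑ m ∈ Ioc (N-h) (2*N-h), ((m:ℕ):ℝ)^δ :=
          Finset.sum_Ioc_consecutive _ (by omega) (by omega)
        have hs2 : (∑ m ∈ Ioc N (2*N-h), ((m:ℕ):ℝ)^δ) + ∑ m ∈ Ioc (2*N-h) (2*N), ((m:ℕ):ℝ)^δ
            = ∑ m ∈ Ioc N (2*N), ((m:ℕ):ℝ)^δ :=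
          Finset.sum_Ioc_consecutive _ (by omega) (by omega)
        have hs3 : ∑ m ∈ Ioc (2*N-h) (2*N), ((m:ℕ):ℝ)^δ ≤ (h:ℝ) * T^δ := by
          have hcard : (Ioc (2*N-h) (2*N)).card = h := by
            rw [Nat.card_Ioc]; omega
          have := Finset.sum_le_card_nsmul (Ioc (2*N-h) (2*N)) (fun m => ((m:ℕ):ℝ)^δ) (T^δ)
            (fun m hm => by
              simp only [mem_Ioc] at hm
              exact Real.rpow_le_rpow (by positivity) (hcastle m hm.2) hδ.le)
          rw [hcard, nsmul_eq_mul] at this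
          exact this
        have hs4 : (0:ℝ) ≤ ∑ m ∈ Ioc (N-h) N, ((m:ℕ):ℝ)^δ := by
          apply Finset.sum_nonneg; intro m hm; positivity
        linarith
      have hterm : ∀ n ∈ Ioc N (2*N), |a n * (a (n-h) - a n)|
          ≤ (Ka*T^δ) * ((Ca/δ) * ((n:ℝ)^δ - ((n-h:ℕ):ℝ)^δ)) := by
        intro n hn; simp only [mem_Ioc] at hn
        have h1n : 1 ≤ n - h := by omega
        have hc : ((n-h:ℕ):ℝ) ≤ (n:ℝ) := by exact_mod_cast Nat.sub_le n h
        have hc1 : (1:ℝ) ≤ ((n-h:ℕ):ℝ) := by exact_mod_cast h1n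
        have hd : |a (n-h) - a n| ≤ (Ca/δ) * ((n:ℝ)^δ - ((n-h:ℕ):ℝ)^δ) := by
          rw [hAa n (by omega), hAa (n-h) h1n, abs_sub_comm]
          exact hvar _ _ hc1 hc
        have hA1 : |a n| ≤ Ka*T^δ := ham n (by omega) hn.2
        calc |a n * (a (n-h) - a n)| = |a n| * |a (n-h) - a n| := abs_mul _ _
          _ ≤ (Ka*T^δ) * ((Ca/δ) * ((n:ℝ)^δ - ((n-h:ℕ):ℝ)^δ)) :=
              mul_le_mul hA1 hd (abs_nonneg _) (by positivity)
      calc |∑ n ∈ Ioc N (2*N), a n * (a (n-h) - a n)|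
          ≤ ∑ n ∈ Ioc N (2*N), |a n * (a (n-h) - a n)| := Finset.abs_sum_le_sum_abs _ _
        _ ≤ ∑ n ∈ Ioc N (2*N), (Ka*T^δ) * ((Ca/δ) * ((n:ℝ)^δ - ((n-h:ℕ):ℝ)^δ)) :=
            Finset.sum_le_sum hterm
        _ = (Ka*T^δ) * ((Ca/δ) * (∑ n ∈ Ioc N (2*N), ((n:ℝ)^δ - ((n-h:ℕ):ℝ)^δ))) := by
            rw [← Finset.mul_sum, ← Finset.mul_sum]
        _ ≤ (Ka*T^δ) * ((Ca/δ) * ((h:ℝ) * T^δ)) := by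
            apply mul_le_mul_of_nonneg_left _ (by positivity)
            exact mul_le_mul_of_nonneg_left hsum (by positivity)
        _ ≤ (Ka*T^δ) * ((Ca/δ) * ((H:ℝ)*T^δ)) := by
            have hhH : (h:ℝ) ≤ (H:ℝ) := by exact_mod_cast hh.2
            have hT0 : (0:ℝ) ≤ T^δ := by positivity
            apply mul_le_mul_of_nonneg_left _ (by positivity)
            apply mul_le_mul_of_nonneg_left _ (by positivity)
            exact mul_le_mul_of_nonneg_right hhH hT0
    calc |∑ h ∈ Icc 1 H, ∑ n ∈ Ioc N (2*N), a n * (a (n-h) - a n)|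
        ≤ ∑ h ∈ Icc 1 H, |∑ n ∈ Ioc N (2*N), a n * (a (n-h) - a n)| :=
          Finset.abs_sum_le_sum_abs _ _
      _ ≤ (Icc 1 H).card • ((Ka*T^δ) * ((Ca/δ) * ((H:ℝ)*T^δ))) :=
          Finset.sum_le_card_nsmul _ _ _ per
      _ = (H:ℝ) * ((Ka*T^δ) * ((Ca/δ) * ((H:ℝ)*T^δ))) := by
          rw [Nat.card_Icc, Nat.add_sub_cancel, nsmul_eq_mul]
  -- E2 bound
  have hE2 : |∑ h ∈ Icc 1 H, ∑ n ∈ Ioc N (2*N), a n * b (n-h)|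
      ≤ (H:ℝ) * (2*(Ka*T^δ)*(Cb*T^(α+δ)) + ((Ca/δ)*T^δ)*(Cb*T^(α+δ))) := by
    have per : ∀ h ∈ Icc 1 H, |∑ n ∈ Ioc N (2*N), a n * b (n-h)|
        ≤ 2*(Ka*T^δ)*(Cb*T^(α+δ)) + ((Ca/δ)*T^δ)*(Cb*T^(α+δ)) := by
      intro h hh
      simp only [mem_Icc] at hh
      have hhN : h ≤ N := le_trans hh.2 hHN
      have hrw : ∑ n ∈ Ioc N (2*N), a n * b (n-h)
          = ∑ m ∈ Ioc (N-h) (2*N-h), a (m+h) * b m := by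
        rw [← hshift h hhN (fun m => a (m+h) * b m)]
        apply Finset.sum_congr rfl
        intro n hn
        simp only [mem_Ioc] at hn
        rw [show n - h + h = n by omega]
      rw [hrw]
      apply abel_bound (fun m => a (m+h)) b B (N-h) (2*N-h) (by omega) hbB
        (Ka*T^δ) (Cb*T^(α+δ)) ((Ca/δ)*T^δ) (by positivity) (by positivity)
      · intro m h1 h2
        exact ham (m+h) (by omega) (by omega)
      · intro m hm
        exact hBm m (by omega)
      · have key : ∀ m ∈ Ioc (N-h) (2*N-h-1), |a (m+h) - a (m+1+h)|
            ≤ (Ca/δ) * ((((m+1+h:ℕ)):ℝ)^δ - (((m+h:ℕ)):ℝ)^δ) := by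
          intro m hm
          simp only [mem_Ioc] at hm
          have h1 : 1 ≤ m + h := by omega
          have hc1 : (1:ℝ) ≤ ((m+h:ℕ):ℝ) := by exact_mod_cast h1
          have hc2 : ((m+h:ℕ):ℝ) ≤ ((m+1+h:ℕ):ℝ) := by exact_mod_cast (by omega : m+h ≤ m+1+h)
          rw [hAa (m+h) h1, hAa (m+1+h) (by omega), abs_sub_comm]
          exact hvar _ _ hc1 hc2
        calc ∑ m ∈ Ioc (N-h) (2*N-h-1), |a (m+h) - a (m+1+h)|
            ≤ ∑ m ∈ Ioc (N-h) (2*N-h-1),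
                ((Ca/δ) * ((((m+1+h:ℕ)):ℝ)^δ - (((m+h:ℕ)):ℝ)^δ)) := Finset.sum_le_sum key
          _ = (Ca/δ) * ∑ m ∈ Ioc (N-h) (2*N-h-1),
                (((((m+1)+h:ℕ)):ℝ)^δ - (((m+h:ℕ)):ℝ)^δ) := by
              rw [← Finset.mul_sum]
          _ ≤ (Ca/δ)*T^δ := by
              rw [telescope_Ioc (fun m => (((m+h:ℕ)):ℝ)^δ) (N-h) (2*N-h-1) (by omega)]
              have e1 : ((2*N-h-1+1+h:ℕ):ℝ) = T := by
                rw [← hcast2N]; congr 1; omega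
              have e2 : (0:ℝ) ≤ ((N-h+1+h:ℕ):ℝ)^δ := by positivity
              rw [e1]
              have : (0:ℝ) ≤ Ca/δ := by positivity
              nlinarith [Real.rpow_nonneg (by positivity : (0:ℝ) ≤ ((N-h+1+h:ℕ):ℝ)) δ]
    calc |∑ h ∈ Icc 1 H, ∑ n ∈ Ioc N (2*N), a n * b (n-h)|
        ≤ ∑ h ∈ Icc 1 H, |∑ n ∈ Ioc N (2*N), a n * b (n-h)| := Finset.abs_sum_le_sum_abs _ _
      _ ≤ (Icc 1 H).card • (2*(Ka*T^δ)*(Cb*T^(α+δ)) + ((Ca/δ)*T^δ)*(Cb*T^(α+δ))) :=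
          Finset.sum_le_card_nsmul _ _ _ per
      _ = (H:ℝ) * (2*(Ka*T^δ)*(Cb*T^(α+δ)) + ((Ca/δ)*T^δ)*(Cb*T^(α+δ))) := by
          rw [Nat.card_Icc, Nat.add_sub_cancel, nsmul_eq_mul]
  -- E3 bound
  have hE3 : |∑ h ∈ Icc 1 H, ∑ n ∈ Ioc N (2*N), b n * a (n-h)|
      ≤ (H:ℝ) * (2*(Ka*T^δ)*(Cb*T^(α+δ)) + ((Ca/δ)*T^δ)*(Cb*T^(α+δ))) := by
    have per : ∀ h ∈ Icc 1 H, |∑ n ∈ Ioc N (2*N), b n * a (n-h)|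
        ≤ 2*(Ka*T^δ)*(Cb*T^(α+δ)) + ((Ca/δ)*T^δ)*(Cb*T^(α+δ)) := by
      intro h hh
      simp only [mem_Icc] at hh
      have hhN : h ≤ N := le_trans hh.2 hHN
      have hrw : ∑ n ∈ Ioc N (2*N), b n * a (n-h)
          = ∑ n ∈ Ioc N (2*N), a (n-h) * b n :=
        Finset.sum_congr rfl (fun n _ => mul_comm _ _)
      rw [hrw]
      apply abel_bound (fun n => a (n-h)) b B N (2*N) (by omega) hbB
        (Ka*T^δ) (Cb*T^(α+δ)) ((Ca/δ)*T^δ) (by positivity) (by positivity)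
      · intro n h1 h2
        exact ham (n-h) (by omega) (by omega)
      · intro n hn
        exact hBm n hn
      · have key : ∀ n ∈ Ioc N (2*N-1), |a (n-h) - a (n+1-h)|
            ≤ (Ca/δ) * (((((n+1)-h:ℕ)):ℝ)^δ - (((n-h:ℕ)):ℝ)^δ) := by
          intro n hn
          simp only [mem_Ioc] at hn
          have h1 : 1 ≤ n - h := by omega
          have hc1 : (1:ℝ) ≤ ((n-h:ℕ):ℝ) := by exact_mod_cast h1
          have hc2 : ((n-h:ℕ):ℝ) ≤ (((n+1)-h:ℕ):ℝ) := by
            exact_mod_cast (by omega : n-h ≤ (n+1)-h)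
          rw [hAa (n-h) h1, hAa ((n+1)-h) (by omega), abs_sub_comm]
          exact hvar _ _ hc1 hc2
        calc ∑ n ∈ Ioc N (2*N-1), |a (n-h) - a (n+1-h)|
            ≤ ∑ n ∈ Ioc N (2*N-1),
                ((Ca/δ) * (((((n+1)-h:ℕ)):ℝ)^δ - (((n-h:ℕ)):ℝ)^δ)) := Finset.sum_le_sum key
          _ = (Ca/δ) * ∑ n ∈ Ioc N (2*N-1),
                (((((n+1)-h:ℕ)):ℝ)^δ - (((n-h:ℕ)):ℝ)^δ) := by rw [← Finset.mul_sum]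
          _ ≤ (Ca/δ)*T^δ := by
              rw [telescope_Ioc (fun n => (((n-h:ℕ)):ℝ)^δ) N (2*N-1) (by omega)]
              have e1 : ((2*N-1+1-h:ℕ):ℝ)^δ ≤ T^δ :=
                Real.rpow_le_rpow (by positivity) (hcastle _ (by omega)) hδ.le
              have e2 : (0:ℝ) ≤ ((N+1-h:ℕ):ℝ)^δ := by positivity
              have : (0:ℝ) ≤ Ca/δ := by positivity
              nlinarith
    calc |∑ h ∈ Icc 1 H, ∑ n ∈ Ioc N (2*N), b n * a (n-h)|
        ≤ ∑ h ∈ Icc 1 H, |∑ n ∈ Ioc N (2*N), b n * a (n-h)| := Finset.abs_sum_le_sum_abs _ _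
      _ ≤ (Icc 1 H).card • (2*(Ka*T^δ)*(Cb*T^(α+δ)) + ((Ca/δ)*T^δ)*(Cb*T^(α+δ))) :=
          Finset.sum_le_card_nsmul _ _ _ per
      _ = (H:ℝ) * (2*(Ka*T^δ)*(Cb*T^(α+δ)) + ((Ca/δ)*T^δ)*(Cb*T^(α+δ))) := by
          rw [Nat.card_Icc, Nat.add_sub_cancel, nsmul_eq_mul]
  -- E4 bound
  have hJ0 : (0:ℝ) ≤ ∑ x ∈ Ioc N (2*N), (∑ n ∈ Ioc x (x+H), b n)^2 := by
    apply Finset.sum_nonneg; intro x hx; positivity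
  have hKeq : min (N+H+1) (2*N) = N+H+1 ∨ min (N+H+1) (2*N) = 2*N := min_choice _ _
  have hKle1 : min (N+H+1) (2*N) ≤ N+H+1 := min_le_left _ _
  have hKle2 : min (N+H+1) (2*N) ≤ 2*N := min_le_right _ _
  have hKgeN : N ≤ min (N+H+1) (2*N) := by rcases hKeq with h|h <;> omega
  have hKgeH : H+1 ≤ min (N+H+1) (2*N) := by rcases hKeq with h|h <;> omega
  have hE4 : |∑ h ∈ Icc 1 H, ∑ n ∈ Ioc N (2*N), b n * b (n-h)|
      ≤ Real.sqrt (N:ℝ) * (Kb*T^δ)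
          * Real.sqrt (∑ x ∈ Ioc N (2*N), (∑ n ∈ Ioc x (x+H), b n)^2)
        + (2*(H:ℝ)) * ((Kb*T^δ) * (2*(Cb*T^(α+δ)))) := by
    have hswap : ∑ h ∈ Icc 1 H, ∑ n ∈ Ioc N (2*N), b n * b (n-h)
        = ∑ n ∈ Ioc N (2*N), b n * (B (n-1) - B (n-1-H)) := by
      rw [Finset.sum_comm]
      apply Finset.sum_congr rfl
      intro n hn
      simp only [mem_Ioc] at hn
      rw [← Finset.mul_sum]
      congr 1
      have hre : ∑ h ∈ Icc 1 H, b (n-h) = ∑ m ∈ Ioc (n-1-H) (n-1), b m := by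
        apply Finset.sum_nbij' (i := fun h => n - h) (j := fun m => n - m)
        · intro h hh; simp only [mem_Icc] at hh; simp only [mem_Ioc]; omega
        · intro m hm; simp only [mem_Ioc] at hm; simp only [mem_Icc]; omega
        · intro h hh; simp only [mem_Icc] at hh; omega
        · intro m hm; simp only [mem_Ioc] at hm; omega
        · intro h hh; rfl
      rw [hre, hBdiff (n-1-H) (n-1) (by omega)]
    rw [hswap]
    set K := min (N+H+1) (2*N) with hKdef
    rw [← Finset.sum_Ioc_consecutive _ hKgeN hKle2]
    have hbdry : |∑ n ∈ Ioc N K, b n * (B (n-1) - B (n-1-H))|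
        ≤ (2*(H:ℝ)) * ((Kb*T^δ) * (2*(Cb*T^(α+δ)))) := by
      have per : ∀ n ∈ Ioc N K, |b n * (B (n-1) - B (n-1-H))|
          ≤ (Kb*T^δ) * (2*(Cb*T^(α+δ))) := by
        intro n hn; simp only [mem_Ioc] at hn
        rw [abs_mul]
        apply mul_le_mul (hbm n (by omega) (by omega)) _ (abs_nonneg _) (by positivity)
        calc |B (n-1) - B (n-1-H)| ≤ |B (n-1)| + |B (n-1-H)| := abs_sub _ _
          _ ≤ 2*(Cb*T^(α+δ)) := by
              have h1 := hBm (n-1) (by omega)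
              have h2 := hBm (n-1-H) (by omega)
              linarith
      calc |∑ n ∈ Ioc N K, b n * (B (n-1) - B (n-1-H))|
          ≤ ∑ n ∈ Ioc N K, |b n * (B (n-1) - B (n-1-H))| := Finset.abs_sum_le_sum_abs _ _
        _ ≤ (Ioc N K).card • ((Kb*T^δ) * (2*(Cb*T^(α+δ)))) :=
            Finset.sum_le_card_nsmul _ _ _ per
        _ ≤ (2*(H:ℝ)) * ((Kb*T^δ) * (2*(Cb*T^(α+δ)))) := by
            rw [nsmul_eq_mul, Nat.card_Ioc]
            apply mul_le_mul_of_nonneg_right _ (by positivity)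
            have : K - N ≤ 2*H := by omega
            calc ((K - N : ℕ):ℝ) ≤ ((2*H : ℕ):ℝ) := by exact_mod_cast this
              _ = 2*(H:ℝ) := by push_cast; ring
    have hmain : |∑ n ∈ Ioc K (2*N), b n * (B (n-1) - B (n-1-H))|
        ≤ Real.sqrt (N:ℝ) * (Kb*T^δ)
          * Real.sqrt (∑ x ∈ Ioc N (2*N), (∑ n ∈ Ioc x (x+H), b n)^2) := by
      have hcs := Finset.sum_mul_sq_le_sq_mul_sq (Ioc K (2*N)) b
        (fun n => B (n-1) - B (n-1-H))
      have hb2 : ∑ n ∈ Ioc K (2*N), b n ^ 2 ≤ (N:ℝ) * (Kb*T^δ)^2 := by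
        have per : ∀ n ∈ Ioc K (2*N), b n ^ 2 ≤ (Kb*T^δ)^2 := by
          intro n hn; simp only [mem_Ioc] at hn
          rw [← sq_abs]
          exact pow_le_pow_left₀ (abs_nonneg _) (hbm n (by omega) (by omega)) 2
        calc ∑ n ∈ Ioc K (2*N), b n ^ 2 ≤ (Ioc K (2*N)).card • ((Kb*T^δ)^2) :=
              Finset.sum_le_card_nsmul _ _ _ per
          _ ≤ (N:ℝ) * (Kb*T^δ)^2 := by
              rw [nsmul_eq_mul, Nat.card_Ioc]
              apply mul_le_mul_of_nonneg_right _ (by positivity)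
              have : 2*N - K ≤ N := by omega
              exact_mod_cast this
      have hw2 : ∑ n ∈ Ioc K (2*N), (B (n-1) - B (n-1-H))^2
          ≤ ∑ x ∈ Ioc N (2*N), (∑ n ∈ Ioc x (x+H), b n)^2 := by
        have hmapK : Ioc K (2*N) = (Ioc (K-(H+1)) (2*N-(H+1))).map (addRightEmbedding (H+1)) := by
          rw [Finset.map_add_right_Ioc]; congr 1 <;> omega
        rw [hmapK, Finset.sum_map]
        simp only [addRightEmbedding_apply]
        have congr2 : ∀ x ∈ Ioc (K-(H+1)) (2*N-(H+1)),
            (B (x+(H+1)-1) - B (x+(H+1)-1-H))^2 = (∑ n ∈ Ioc x (x+H), b n)^2 := by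
          intro x hx; simp only [mem_Ioc] at hx
          rw [show x+(H+1)-1 = x+H by omega, show x+H-H = x by omega,
            hBdiff x (x+H) (by omega)]
        rw [Finset.sum_congr rfl congr2]
        apply Finset.sum_le_sum_of_subset_of_nonneg
        · intro x hx
          simp only [mem_Ioc] at hx ⊢
          rcases hKeq with h|h <;> omega
        · intro x _ _; positivity
      have habs : |∑ n ∈ Ioc K (2*N), b n * (B (n-1) - B (n-1-H))|
          = Real.sqrt ((∑ n ∈ Ioc K (2*N), b n * (B (n-1) - B (n-1-H)))^2) :=
        (Real.sqrt_sq_eq_abs _).symm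
      rw [habs]
      calc Real.sqrt ((∑ n ∈ Ioc K (2*N), b n * (B (n-1) - B (n-1-H)))^2)
          ≤ Real.sqrt ((∑ n ∈ Ioc K (2*N), b n ^2)
              * ∑ n ∈ Ioc K (2*N), (B (n-1) - B (n-1-H))^2) := Real.sqrt_le_sqrt hcs
        _ ≤ Real.sqrt (((N:ℝ) * (Kb*T^δ)^2)
              * ∑ x ∈ Ioc N (2*N), (∑ n ∈ Ioc x (x+H), b n)^2) := by
            apply Real.sqrt_le_sqrt
            apply mul_le_mul hb2 hw2 (Finset.sum_nonneg fun n _ => by positivity) (by positivity)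
        _ = Real.sqrt (N:ℝ) * (Kb*T^δ)
              * Real.sqrt (∑ x ∈ Ioc N (2*N), (∑ n ∈ Ioc x (x+H), b n)^2) := by
            rw [Real.sqrt_mul (by positivity), Real.sqrt_mul (by positivity),
              Real.sqrt_sq (by positivity)]
    calc |(∑ n ∈ Ioc N K, b n * (B (n-1) - B (n-1-H)))
          + ∑ n ∈ Ioc K (2*N), b n * (B (n-1) - B (n-1-H))|
        ≤ |∑ n ∈ Ioc N K, b n * (B (n-1) - B (n-1-H))|
          + |∑ n ∈ Ioc K (2*N), b n * (B (n-1) - B (n-1-H))| := abs_add_le _ _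
      _ ≤ Real.sqrt (N:ℝ) * (Kb*T^δ)
            * Real.sqrt (∑ x ∈ Ioc N (2*N), (∑ n ∈ Ioc x (x+H), b n)^2)
          + (2*(H:ℝ)) * ((Kb*T^δ) * (2*(Cb*T^(α+δ)))) := by linarith [hbdry, hmain]
  -- conversions
  have hT2 : T^δ = 2^δ*(N:ℝ)^δ := by rw [hTdef]; exact Real.mul_rpow (by norm_num) hN0.le
  have hTa : T^(α+δ) = 2^(α+δ)*(N:ℝ)^(α+δ) := by
    rw [hTdef]; exact Real.mul_rpow (by norm_num) hN0.le
  have hNδε : (N:ℝ)^δ*(N:ℝ)^δ = (N:ℝ)^ε := by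
    rw [← Real.rpow_add hN0]; congr 1; rw [hδdef]; ring
  have hNαε : (N:ℝ)^δ*(N:ℝ)^(α+δ) = (N:ℝ)^α*(N:ℝ)^ε := by
    rw [← Real.rpow_add hN0, ← Real.rpow_add hN0]; congr 1; rw [hδdef]; ring
  have hNδle : (N:ℝ)^δ ≤ (N:ℝ)^ε :=
    Real.rpow_le_rpow_of_exponent_le hN1 (by rw [hδdef]; linarith)
  have hsqrtN : Real.sqrt (N:ℝ) = (N:ℝ)^((1:ℝ)/2) := Real.sqrt_eq_rpow _
  obtain ⟨sqJ, hsqJdef⟩ : ∃ y : ℝ, y = Real.sqrt (∑ x ∈ Ioc N (2*N), (∑ n ∈ Ioc x (x+H), b n)^2) := ⟨_, rfl⟩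
  rw [← hsqJdef] at hE4 ⊢
  have hsqJ0 : 0 ≤ sqJ := hsqJdef ▸ Real.sqrt_nonneg _
  -- final per-term bounds
  have hE1f : |∑ h ∈ Icc 1 H, ∑ n ∈ Ioc N (2*N), a n * (a (n-h) - a n)|
      ≤ ((Ka*(Ca/δ))*(2^δ*2^δ)) * ((N:ℝ)^ε * (H:ℝ)^2) := by
    calc |∑ h ∈ Icc 1 H, ∑ n ∈ Ioc N (2*N), a n * (a (n-h) - a n)|
        ≤ (H:ℝ) * ((Ka*T^δ) * ((Ca/δ) * ((H:ℝ)*T^δ))) := hE1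
      _ = ((Ka*(Ca/δ))*(2^δ*2^δ)) * (((N:ℝ)^δ*(N:ℝ)^δ) * (H:ℝ)^2) := by rw [hT2]; ring
      _ = ((Ka*(Ca/δ))*(2^δ*2^δ)) * ((N:ℝ)^ε * (H:ℝ)^2) := by rw [hNδε]
  have hE2f : |∑ h ∈ Icc 1 H, ∑ n ∈ Ioc N (2*N), a n * b (n-h)|
      ≤ ((2*Ka + Ca/δ)*Cb*(2^δ*2^(α+δ))) * ((N:ℝ)^ε * ((N:ℝ)^α*(H:ℝ))) := by
    calc |∑ h ∈ Icc 1 H, ∑ n ∈ Ioc N (2*N), a n * b (n-h)|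
        ≤ (H:ℝ) * (2*(Ka*T^δ)*(Cb*T^(α+δ)) + ((Ca/δ)*T^δ)*(Cb*T^(α+δ))) := hE2
      _ = ((2*Ka + Ca/δ)*Cb*(2^δ*2^(α+δ))) * (((N:ℝ)^δ*(N:ℝ)^(α+δ)) * (H:ℝ)) := by
          rw [hT2, hTa]; ring
      _ = ((2*Ka + Ca/δ)*Cb*(2^δ*2^(α+δ))) * ((N:ℝ)^ε * ((N:ℝ)^α*(H:ℝ))) := by
          rw [hNαε]; ring
  have hE3f : |∑ h ∈ Icc 1 H, ∑ n ∈ Ioc N (2*N), b n * a (n-h)|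
      ≤ ((2*Ka + Ca/δ)*Cb*(2^δ*2^(α+δ))) * ((N:ℝ)^ε * ((N:ℝ)^α*(H:ℝ))) := by
    calc |∑ h ∈ Icc 1 H, ∑ n ∈ Ioc N (2*N), b n * a (n-h)|
        ≤ (H:ℝ) * (2*(Ka*T^δ)*(Cb*T^(α+δ)) + ((Ca/δ)*T^δ)*(Cb*T^(α+δ))) := hE3
      _ = ((2*Ka + Ca/δ)*Cb*(2^δ*2^(α+δ))) * (((N:ℝ)^δ*(N:ℝ)^(α+δ)) * (H:ℝ)) := by
          rw [hT2, hTa]; ring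
      _ = ((2*Ka + Ca/δ)*Cb*(2^δ*2^(α+δ))) * ((N:ℝ)^ε * ((N:ℝ)^α*(H:ℝ))) := by
          rw [hNαε]; ring
  have hE4f : |∑ h ∈ Icc 1 H, ∑ n ∈ Ioc N (2*N), b n * b (n-h)|
      ≤ (Kb*2^δ) * ((N:ℝ)^ε * ((N:ℝ)^((1:ℝ)/2) * sqJ))
        + (4*Kb*Cb*(2^δ*2^(α+δ))) * ((N:ℝ)^ε * ((N:ℝ)^α*(H:ℝ))) := by
    have m1 : Real.sqrt (N:ℝ) * (Kb*T^δ) * sqJ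
        = (Kb*2^δ) * ((N:ℝ)^δ * ((N:ℝ)^((1:ℝ)/2) * sqJ)) := by
      rw [hT2, hsqrtN]; ring
    have m2 : (Kb*2^δ) * ((N:ℝ)^δ * ((N:ℝ)^((1:ℝ)/2) * sqJ))
        ≤ (Kb*2^δ) * ((N:ℝ)^ε * ((N:ℝ)^((1:ℝ)/2) * sqJ)) := by
      apply mul_le_mul_of_nonneg_left _ (by positivity)
      exact mul_le_mul_of_nonneg_right hNδle (by positivity)
    have m3 : (2*(H:ℝ)) * ((Kb*T^δ) * (2*(Cb*T^(α+δ))))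
        = (4*Kb*Cb*(2^δ*2^(α+δ))) * (((N:ℝ)^δ*(N:ℝ)^(α+δ)) * (H:ℝ)) := by
      rw [hT2, hTa]; ring
    calc |∑ h ∈ Icc 1 H, ∑ n ∈ Ioc N (2*N), b n * b (n-h)|
        ≤ Real.sqrt (N:ℝ) * (Kb*T^δ) * sqJ
          + (2*(H:ℝ)) * ((Kb*T^δ) * (2*(Cb*T^(α+δ)))) := hE4
      _ ≤ (Kb*2^δ) * ((N:ℝ)^ε * ((N:ℝ)^((1:ℝ)/2) * sqJ))
          + (4*Kb*Cb*(2^δ*2^(α+δ))) * (((N:ℝ)^δ*(N:ℝ)^(α+δ)) * (H:ℝ)) := by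
          rw [m3]; rw [m1]; linarith [m2]
      _ = (Kb*2^δ) * ((N:ℝ)^ε * ((N:ℝ)^((1:ℝ)/2) * sqJ))
          + (4*Kb*Cb*(2^δ*2^(α+δ))) * ((N:ℝ)^ε * ((N:ℝ)^α*(H:ℝ))) := by
          rw [hNαε]; ring
  -- assemble
  rw [hdecomp]
  have habs4 : |(∑ h ∈ Icc 1 H, ∑ n ∈ Ioc N (2*N), a n * (a (n-h) - a n))
      + (∑ h ∈ Icc 1 H, ∑ n ∈ Ioc N (2*N), a n * b (n-h))
      + (∑ h ∈ Icc 1 H, ∑ n ∈ Ioc N (2*N), b n * a (n-h))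
      + (∑ h ∈ Icc 1 H, ∑ n ∈ Ioc N (2*N), b n * b (n-h))|
      ≤ |∑ h ∈ Icc 1 H, ∑ n ∈ Ioc N (2*N), a n * (a (n-h) - a n)|
      + |∑ h ∈ Icc 1 H, ∑ n ∈ Ioc N (2*N), a n * b (n-h)|
      + |∑ h ∈ Icc 1 H, ∑ n ∈ Ioc N (2*N), b n * a (n-h)|
      + |∑ h ∈ Icc 1 H, ∑ n ∈ Ioc N (2*N), b n * b (n-h)| := by
    calc _ ≤ |(∑ h ∈ Icc 1 H, ∑ n ∈ Ioc N (2*N), a n * (a (n-h) - a n))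
          + (∑ h ∈ Icc 1 H, ∑ n ∈ Ioc N (2*N), a n * b (n-h))
          + (∑ h ∈ Icc 1 H, ∑ n ∈ Ioc N (2*N), b n * a (n-h))|
        + |∑ h ∈ Icc 1 H, ∑ n ∈ Ioc N (2*N), b n * b (n-h)| := abs_add_le _ _
      _ ≤ _ := by
        have h1 : |(∑ h ∈ Icc 1 H, ∑ n ∈ Ioc N (2*N), a n * (a (n-h) - a n))
            + (∑ h ∈ Icc 1 H, ∑ n ∈ Ioc N (2*N), a n * b (n-h))
            + (∑ h ∈ Icc 1 H, ∑ n ∈ Ioc N (2*N), b n * a (n-h))|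
            ≤ |(∑ h ∈ Icc 1 H, ∑ n ∈ Ioc N (2*N), a n * (a (n-h) - a n))
            + (∑ h ∈ Icc 1 H, ∑ n ∈ Ioc N (2*N), a n * b (n-h))|
            + |∑ h ∈ Icc 1 H, ∑ n ∈ Ioc N (2*N), b n * a (n-h)| := abs_add_le _ _
        have h2 : |(∑ h ∈ Icc 1 H, ∑ n ∈ Ioc N (2*N), a n * (a (n-h) - a n))
            + (∑ h ∈ Icc 1 H, ∑ n ∈ Ioc N (2*N), a n * b (n-h))|
            ≤ |∑ h ∈ Icc 1 H, ∑ n ∈ Ioc N (2*N), a n * (a (n-h) - a n)|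
            + |∑ h ∈ Icc 1 H, ∑ n ∈ Ioc N (2*N), a n * b (n-h)| := abs_add_le _ _
        linarith
  have hc10 : (0:ℝ) ≤ (Ka*(Ca/δ))*(2^δ*2^δ) :=
    mul_nonneg (mul_nonneg hKa0 (div_nonneg hCa0 hδ.le)) (by positivity)
  have hc20 : (0:ℝ) ≤ (2*Ka + Ca/δ)*Cb*(2^δ*2^(α+δ)) := by
    apply mul_nonneg (mul_nonneg _ hCb0) (by positivity)
    have := div_nonneg hCa0 hδ.le
    linarith
  have hc4a0 : (0:ℝ) ≤ Kb*2^δ := mul_nonneg hKb0 (by positivity)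
  have hc4b0 : (0:ℝ) ≤ 4*Kb*Cb*(2^δ*2^(α+δ)) := by
    apply mul_nonneg (mul_nonneg (by linarith) hCb0) (by positivity)
  have hX1 : (0:ℝ) ≤ (N:ℝ)^ε * ((N:ℝ)^((1:ℝ)/2) * sqJ) := by positivity
  have hX2 : (0:ℝ) ≤ (N:ℝ)^ε * ((N:ℝ)^α*(H:ℝ)) := by positivity
  have hX3 : (0:ℝ) ≤ (N:ℝ)^ε * (H:ℝ)^2 := by positivity
  obtain ⟨C, hCdef⟩ : ∃ y : ℝ, y = (Ka*(Ca/δ))*(2^δ*2^δ) + 2*((2*Ka + Ca/δ)*Cb*(2^δ*2^(α+δ)))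
    + Kb*2^δ + 4*Kb*Cb*(2^δ*2^(α+δ)) := ⟨_, rfl⟩
  rw [← hCdef]
  have t1 : ((Ka*(Ca/δ))*(2^δ*2^δ)) * ((N:ℝ)^ε * (H:ℝ)^2) ≤ C * ((N:ℝ)^ε * (H:ℝ)^2) :=
    mul_le_mul_of_nonneg_right (by rw [hCdef]; linarith) hX3
  have t2 : (2*((2*Ka + Ca/δ)*Cb*(2^δ*2^(α+δ))) + 4*Kb*Cb*(2^δ*2^(α+δ)))
      * ((N:ℝ)^ε * ((N:ℝ)^α*(H:ℝ))) ≤ C * ((N:ℝ)^ε * ((N:ℝ)^α*(H:ℝ))) :=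
    mul_le_mul_of_nonneg_right (by rw [hCdef]; linarith) hX2
  have t3 : (Kb*2^δ) * ((N:ℝ)^ε * ((N:ℝ)^((1:ℝ)/2) * sqJ))
      ≤ C * ((N:ℝ)^ε * ((N:ℝ)^((1:ℝ)/2) * sqJ)) :=
    mul_le_mul_of_nonneg_right (by rw [hCdef]; linarith) hX1
  have hring : C * (N:ℝ)^ε * ((N:ℝ)^((1:ℝ)/2) * sqJ + (N:ℝ)^α*(H:ℝ) + (H:ℝ)^2)
      = C * ((N:ℝ)^ε * ((N:ℝ)^((1:ℝ)/2) * sqJ)) + C * ((N:ℝ)^ε * ((N:ℝ)^α*(H:ℝ)))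
        + C * ((N:ℝ)^ε * (H:ℝ)^2) := by ring
  linarith [habs4, hE1f, hE2f, hE3f, hE4f, t1, t2, t3]
end
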